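/- arXiv:math/0606746 — 6 statements merged into one kernel-verified Lean document; each statement's English description precedes it below -/
import Mathlib

section
/- Let M = M(Σ,I) be a free partially commutative monoid. Two elements u, v ∈ M(Σ,I) are equal if and only if π_{a,b}(u) = π_{a,b}(v) for every pair (a,b) in the complement D = Σ×Σ \ I of the commutation relation. -/
open scoped Classical

/-- The elementary commutation relation on words: `ab ~ ba` for `(a,b) ∈ I`. -/
def TraceRel {α : Type*} (I : α → α → Prop) : FreeMonoid α → FreeMonoid α → Prop :=
  fun u v => ∃ a b, I a b ∧ u = FreeMonoid.of a * FreeMonoid.of b ∧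
    v = FreeMonoid.of b * FreeMonoid.of a

/-- The congruence on the free monoid generated by the commutation relation. -/
def TraceCon {α : Type*} (I : α → α → Prop) : Con (FreeMonoid α) := conGen (TraceRel I)

/-- The free partially commutative monoid `M(Σ, I)`: the monoid presented by
generators `Σ` and relations `ab = ba` for `(a,b) ∈ I`. -/
abbrev TraceMonoid (α : Type*) (I : α → α → Prop) : Type _ := (TraceCon I).Quotient

/-- The canonical map `Σ* → M(Σ, I)` sending a word to its class. -/
def TraceMonoid.mk {α : Type*} (I : α → α → Prop) : FreeMonoid α →* TraceMonoid α I :=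
  Con.mk' _

/-- The projection `π_A : M(Σ, I) → M(A, I_A)` erasing all letters not in `A`. -/
noncomputable def TraceMonoid.proj {α : Type*} (I : α → α → Prop) (A : Set α) :
    TraceMonoid α I →* TraceMonoid A (fun a b => I a.1 b.1) :=
  Con.lift _ ((TraceMonoid.mk _).comp (FreeMonoid.lift fun c =>
    if h : c ∈ A then FreeMonoid.of (⟨c, h⟩ : A) else 1)) <| by
    refine Con.conGen_le.2 ?_
    rintro u v ⟨a, b, hI, rfl, rfl⟩
    simp only [Con.ker_rel, map_mul, MonoidHom.comp_apply, FreeMonoid.lift_eval_of]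
    by_cases ha : a ∈ A <;> by_cases hb : b ∈ A <;>
      simp only [ha, hb, dif_pos, dif_neg, not_false_iff, map_one, one_mul, mul_one]
    rw [← map_mul, ← map_mul]
    exact Quotient.sound (ConGen.Rel.of _ _ ⟨⟨a, ha⟩, ⟨b, hb⟩, hI, rfl, rfl⟩)

/-! ### Auxiliary lemmas for the projection lemma -/

/-- Word-level projection keeping only the letters satisfying `P`. -/
noncomputable def FProj {σ : Type*} (P : σ → Bool) : FreeMonoid σ →* FreeMonoid σ :=
  FreeMonoid.lift fun c => if P c then FreeMonoid.of c else 1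

lemma fproj_ofList {σ : Type*} (P : σ → Bool) (l : List σ) :
    FProj P (FreeMonoid.ofList l) =
      FreeMonoid.ofList (l.filter P) := by
  induction l with
  | nil => simp [FreeMonoid.ofList_nil, FProj]
  | cons a l ih =>
    rw [List.filter_cons, FreeMonoid.ofList_cons, map_mul, ih]
    by_cases h : P a = true <;>
      simp [FProj, FreeMonoid.lift_eval_of, h, FreeMonoid.ofList_cons]

/-- A letter commuting with every letter of `s` can be moved across `s`. -/
lemma traceCon_comm_head {σ : Type*} {I : σ → σ → Prop} {a : σ} :
    ∀ (s : List σ), (∀ b ∈ s, I a b) → ∀ (t : List σ),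
      TraceCon I (FreeMonoid.ofList (s ++ a :: t)) (FreeMonoid.ofList (a :: (s ++ t))) := by
  intro s
  induction s with
  | nil => intro _ t; exact (TraceCon I).refl _
  | cons b s ih =>
    intro hb t
    have h1 : TraceCon I (FreeMonoid.ofList (b :: (s ++ a :: t)))
        (FreeMonoid.ofList (b :: a :: (s ++ t))) := by
      rw [FreeMonoid.ofList_cons, FreeMonoid.ofList_cons]
      exact (TraceCon I).mul ((TraceCon I).refl _) (ih (fun c hc => hb c (.tail _ hc)) t)
    have h2 : TraceCon I (FreeMonoid.ofList (b :: a :: (s ++ t)))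
        (FreeMonoid.ofList (a :: b :: (s ++ t))) := by
      rw [FreeMonoid.ofList_cons, FreeMonoid.ofList_cons, FreeMonoid.ofList_cons,
        FreeMonoid.ofList_cons, ← mul_assoc, ← mul_assoc]
      refine (TraceCon I).mul ?_ ((TraceCon I).refl _)
      exact (TraceCon I).symm
        (ConGen.Rel.of _ _ ⟨a, b, hb b (.head _), rfl, rfl⟩)
    exact (TraceCon I).trans h1 h2

lemma exists_split_first {σ : Type*} {a : σ} :
    ∀ {l : List σ}, a ∈ l → ∃ s t, l = s ++ a :: t ∧ a ∉ s := by
  intro l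
  induction l with
  | nil => intro h; exact absurd h List.not_mem_nil
  | cons b l ih =>
    intro h
    by_cases hba : b = a
    · exact ⟨[], l, by rw [hba]; rfl, List.not_mem_nil⟩
    · obtain ⟨s, t, rfl, hs⟩ := ih (by
        rcases List.mem_cons.1 h with h' | h'
        · exact absurd h'.symm hba
        · exact h')
      exact ⟨b :: s, t, rfl, by
        intro hmem
        rcases List.mem_cons.1 hmem with h' | h'
        · exact hba h'.symm
        · exact hs h'⟩

/-- Core combinatorial lemma at the level of words. -/
lemma key_lemma {σ : Type*} {I : σ → σ → Prop} (hsym : Symmetric I)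
    (hirr : Irreflexive I) :
    ∀ (n : ℕ) (u v : List σ), u.length ≤ n →
      (∀ a b : σ, ¬ I a b →
        (u.filter fun c => decide (c = a ∨ c = b)) =
          (v.filter fun c => decide (c = a ∨ c = b))) →
      TraceCon I (FreeMonoid.ofList u) (FreeMonoid.ofList v) := by
  intro n
  induction n with
  | zero =>
    intro u v hu h
    have hu0 : u = [] := List.length_eq_zero_iff.1 (Nat.le_zero.1 hu)
    subst hu0
    have hv : v = [] := by
      by_contra hv
      obtain ⟨c, hc⟩ := List.exists_mem_of_ne_nil v hv
      have := h c c (hirr c)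
      simp only [List.filter_nil] at this
      have hcmem : c ∈ v.filter fun d => decide (d = c ∨ d = c) :=
        List.mem_filter.2 ⟨hc, by simp⟩
      rw [← this] at hcmem
      exact List.not_mem_nil hcmem
    subst hv
    exact (TraceCon I).refl _
  | succ n ih =>
    intro u v hu h
    match u with
    | [] => exact ih [] v (Nat.zero_le n) h
    | a :: u' =>
      -- `a` occurs in `v`
      have ha : a ∈ v := by
        have := h a a (hirr a)
        have hmem : a ∈ v.filter fun d => decide (d = a ∨ d = a) := by
          rw [← this]
          exact List.mem_filter.2 ⟨List.mem_cons_self, by simp⟩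
        exact (List.mem_filter.1 hmem).1
      obtain ⟨s, t, rfl, hs⟩ := exists_split_first ha
      -- every letter of `s` commutes with `a`
      have hcomm : ∀ b ∈ s, I a b := by
        intro b hb
        by_contra hI
        have heq := h a b hI
        have hsne : (s.filter fun c => decide (c = a ∨ c = b)) ≠ [] := by
          intro h0
          have : b ∈ s.filter fun c => decide (c = a ∨ c = b) :=
            List.mem_filter.2 ⟨hb, by simp⟩
          rw [h0] at this
          exact List.not_mem_nil this
        obtain ⟨b', r, hsr⟩ := List.exists_cons_of_ne_nil hsne
        rw [List.filter_cons_of_pos (by simp), List.filter_append,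
          List.filter_cons_of_pos (by simp), hsr] at heq
        have hab' : a = b' := by
          have := congrArg (fun l => l.head?) heq
          simpa using this
        have : b' ∈ s := (List.mem_filter.1 (hsr ▸ (List.mem_cons_self : b' ∈ b' :: r))).1
        exact hs (hab' ▸ this)
      -- the filters of `u'` and `s ++ t` still agree
      have hfilt : ∀ a' b' : σ, ¬ I a' b' →
          (u'.filter fun c => decide (c = a' ∨ c = b')) =
            ((s ++ t).filter fun c => decide (c = a' ∨ c = b')) := by
        intro a' b' hI'
        have heq := h a' b' hI'
        rw [List.filter_cons, List.filter_append, List.filter_cons] at heq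
        rw [List.filter_append]
        by_cases hPa : a = a' ∨ a = b'
        · have hsfilt : (s.filter fun c => decide (c = a' ∨ c = b')) = [] := by
            rw [List.filter_eq_nil_iff]
            intro c hc
            simp only [decide_eq_true_iff]
            rintro (rfl | rfl)
            · rcases hPa with rfl | rfl
              · exact hirr a (hcomm a hc)
              · exact hI' (hsym (hcomm c hc))
            · rcases hPa with rfl | rfl
              · exact hI' (hcomm c hc)
              · exact hirr a (hcomm a hc)
          rw [hsfilt] at heq ⊢
          simp only [List.nil_append] at heq ⊢
          simp only [decide_eq_true_iff, hPa, if_pos] at heq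
          exact (List.cons.inj heq).2
        · simp only [decide_eq_true_iff, hPa, if_neg, not_false_iff] at heq
          exact heq
      have hlen : u'.length ≤ n := Nat.succ_le_succ_iff.1 hu
      have h1 : TraceCon I (FreeMonoid.ofList u') (FreeMonoid.ofList (s ++ t)) :=
        ih u' (s ++ t) hlen hfilt
      have h2 : TraceCon I (FreeMonoid.ofList (a :: u'))
          (FreeMonoid.ofList (a :: (s ++ t))) := by
        rw [FreeMonoid.ofList_cons, FreeMonoid.ofList_cons]
        exact (TraceCon I).mul ((TraceCon I).refl _) h1
      have h3 := traceCon_comm_head s hcomm t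
      exact (TraceCon I).trans h2 ((TraceCon I).symm h3)

/-- **Projection Lemma.** Two elements `u, v ∈ M(Σ, I)` are equal if and only if
`π_{a,b}(u) = π_{a,b}(v)` for every pair `(a, b)` in the complement `D = Σ×Σ \ I`
of the commutation relation. -/
theorem projection_lemma {σ : Type*} [Fintype σ] (I : σ → σ → Prop)
    (hsym : Symmetric I) (hirr : Irreflexive I) (u v : TraceMonoid σ I) :
    u = v ↔ ∀ a b : σ, ¬ I a b →
      TraceMonoid.proj I {a, b} u = TraceMonoid.proj I {a, b} v := by
  constructor
  · rintro rfl a b _; rfl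
  · intro h
    obtain ⟨wu, rfl⟩ := Con.mk'_surjective u
    obtain ⟨wv, rfl⟩ := Con.mk'_surjective v
    have key : ∀ a b : σ, ¬ I a b →
        ((FreeMonoid.toList wu).filter fun c => decide (c = a ∨ c = b)) =
          ((FreeMonoid.toList wv).filter fun c => decide (c = a ∨ c = b)) := by
      intro a b hab
      have hproj := h a b hab
      set A : Set σ := {a, b} with hA
      set g : FreeMonoid σ →* FreeMonoid A :=
        FreeMonoid.lift fun c =>
          if h : c ∈ A then FreeMonoid.of (⟨c, h⟩ : A) else 1 with hg
      -- unfold the projection on representatives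
      have hlift : ∀ w : FreeMonoid σ,
          TraceMonoid.proj I A ((TraceCon I).mk' w) =
            TraceMonoid.mk (fun a b : A => I a.1 b.1) (g w) := fun w => by
        unfold TraceMonoid.proj
        refine (Con.lift_mk' (c := TraceCon I) _ w).trans ?_
        rw [MonoidHom.comp_apply, hg]
        congr!
      rw [hlift, hlift] at hproj
      -- the trace congruence on `A` is trivial
      have htriv : TraceCon (fun p q : A => I p.1 q.1) ≤ ⊥ := by
        refine Con.conGen_le.2 ?_
        rintro x y ⟨p, q, hpq, rfl, rfl⟩
        exfalso
        have hp' : p.1 = a ∨ p.1 = b := p.2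
        have hq' : q.1 = a ∨ q.1 = b := q.2
        rcases hp' with hp | hp <;> rcases hq' with hq | hq <;>
          first
          | exact hab (hp ▸ hq ▸ hpq)
          | exact hab (hsym (hp ▸ hq ▸ hpq))
          | exact hirr _ (hp ▸ hq ▸ hpq)
      have hg_eq : g wu = g wv := htriv ((TraceCon _).eq.1 hproj)
      -- project down to plain words via `Subtype.val`
      have hcomp : (FreeMonoid.map Subtype.val).comp g =
          FProj (fun c => decide (c = a ∨ c = b)) := by
        refine FreeMonoid.hom_eq fun c => ?_
        simp only [MonoidHom.comp_apply, hg, FProj, FreeMonoid.lift_eval_of]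
        by_cases hc : c ∈ A
        · rw [dif_pos hc, if_pos (decide_eq_true
            (by simpa [hA, Set.mem_insert_iff] using hc))]
          rfl
        · rw [dif_neg hc, if_neg (by
            simp only [decide_eq_true_eq]
            simpa [hA, Set.mem_insert_iff] using hc), map_one]
      have := congrArg (FreeMonoid.map Subtype.val) hg_eq
      rw [← MonoidHom.comp_apply, ← MonoidHom.comp_apply, hcomp] at this
      have h1 := fproj_ofList (fun c => decide (c = a ∨ c = b)) (FreeMonoid.toList wu)
      have h2 := fproj_ofList (fun c => decide (c = a ∨ c = b)) (FreeMonoid.toList wv)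
      rw [FreeMonoid.ofList_toList] at h1 h2
      rw [h1, h2] at this
      exact FreeMonoid.ofList.injective this
    have hcon : TraceCon I wu wv := by
      have := key_lemma hsym hirr (FreeMonoid.toList wu).length
        (FreeMonoid.toList wu) (FreeMonoid.toList wv) le_rfl key
      rwa [FreeMonoid.ofList_toList, FreeMonoid.ofList_toList] at this
    exact (TraceCon I).eq.2 hcon
end

section
/- Let M = M(Σ,I) be a free partially commutative monoid and t, u, v, w ∈ M(Σ,I). Then tu = vw if and only if there exist p, q, r, s ∈ M(Σ,I) such that t = pr, u = sq, v = ps, w = rq, with rs = sr and alph(r) ∩ alph(s) = ∅. -/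
open scoped Classical

/-- The set of letters occurring in a word. -/
def letterSet {α : Type*} (w : FreeMonoid α) : Set α := {a | a ∈ FreeMonoid.toList w}

theorem letterSet_mul {α : Type*} (u v : FreeMonoid α) :
    letterSet (u * v) = letterSet u ∪ letterSet v := by
  ext a; simp [letterSet, FreeMonoid.toList_mul]

/-- `alph x`: the set of letters of `Σ` that appear in (any word representing)
the element `x` of `M(Σ, I)`; it is independent of the chosen representative. -/
def alph {α : Type*} (I : α → α → Prop) (x : TraceMonoid α I) : Set α :=
  Con.liftOn x letterSet <| by
    intro a b h
    induction h with
    | of x y h =>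
      obtain ⟨a, b, _, rfl, rfl⟩ := h
      rw [letterSet_mul, letterSet_mul]
      exact Set.union_comm _ _
    | refl => rfl
    | symm _ ih => exact ih.symm
    | trans _ _ ih₁ ih₂ => exact ih₁.trans ih₂
    | mul _ _ ih₁ ih₂ => rw [letterSet_mul, letterSet_mul, ih₁, ih₂]

section LeviAux

open Relation

variable {σ : Type*} (I : σ → σ → Prop)

/-- One-step commutation rewriting on words (as lists). -/
def SStep : List σ → List σ → Prop :=
  fun w₁ w₂ => ∃ x a b y, I a b ∧ w₁ = x ++ a :: b :: y ∧ w₂ = x ++ b :: a :: y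

/-- The reflexive-transitive closure of one-step rewriting. -/
def Equ : List σ → List σ → Prop := ReflTransGen (SStep I)

variable {I}

theorem sstep_symm (hsym : Symmetric I) : Symmetric (SStep I) := by
  rintro w₁ w₂ ⟨x, a, b, y, h, rfl, rfl⟩
  exact ⟨x, b, a, y, hsym h, rfl, rfl⟩

theorem equ_refl (w : List σ) : Equ I w w := ReflTransGen.refl

theorem equ_trans {w₁ w₂ w₃ : List σ} (h₁ : Equ I w₁ w₂) (h₂ : Equ I w₂ w₃) :
    Equ I w₁ w₃ := ReflTransGen.trans h₁ h₂

theorem equ_symm (hsym : Symmetric I) {w₁ w₂ : List σ} (h : Equ I w₁ w₂) :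
    Equ I w₂ w₁ := by
    haveI : Std.Symm (SStep I) := ⟨fun _ _ hab => sstep_symm hsym hab⟩
    exact @Std.Symm.symm _ (ReflTransGen (SStep I)) _ _ _ h

theorem equ_append_left (c : List σ) {w₁ w₂ : List σ} (h : Equ I w₁ w₂) :
    Equ I (c ++ w₁) (c ++ w₂) := by
  refine ReflTransGen.lift (c ++ ·) ?_ _ _ h
  rintro u v ⟨x, a, b, y, hI, rfl, rfl⟩
  exact ⟨c ++ x, a, b, y, hI, by simp, by simp⟩

theorem equ_append_right (c : List σ) {w₁ w₂ : List σ} (h : Equ I w₁ w₂) :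
    Equ I (w₁ ++ c) (w₂ ++ c) := by
  refine ReflTransGen.lift (· ++ c) ?_ _ _ h
  rintro u v ⟨x, a, b, y, hI, rfl, rfl⟩
  exact ⟨x, a, b, y ++ c, hI, by simp, by simp⟩

theorem equ_cons (a : σ) {w₁ w₂ : List σ} (h : Equ I w₁ w₂) :
    Equ I (a :: w₁) (a :: w₂) := equ_append_left [a] h

theorem equ_append {x x' y y' : List σ} (h₁ : Equ I x x') (h₂ : Equ I y y') :
    Equ I (x ++ y) (x' ++ y') :=
  equ_trans (equ_append_right y h₁) (equ_append_left x' h₂)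

/-- The chain relation as a congruence on the free monoid. -/
def equCon (I : σ → σ → Prop) (hsym : Symmetric I) : Con (FreeMonoid σ) where
  r u v := Equ I u.toList v.toList
  iseqv := ⟨fun _ => equ_refl _, fun h => equ_symm hsym h, fun h₁ h₂ => equ_trans h₁ h₂⟩
  mul' h₁ h₂ := by
    simpa only [FreeMonoid.toList_mul] using equ_append h₁ h₂

theorem traceCon_iff (hsym : Symmetric I) (u v : FreeMonoid σ) :
    TraceCon I u v ↔ Equ I u.toList v.toList := by
  constructor
  · intro h
    refine (Con.conGen_le (c := equCon I hsym)).2 ?_ h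
    rintro x y ⟨a, b, hI, rfl, rfl⟩
    exact ReflTransGen.single ⟨[], a, b, [], hI, rfl, rfl⟩
  · intro h
    have key : ∀ l₁ l₂ : List σ, Equ I l₁ l₂ →
        TraceCon I (FreeMonoid.ofList l₁) (FreeMonoid.ofList l₂) := by
      intro l₁ l₂ h
      induction h with
      | refl => exact (TraceCon I).refl _
      | tail _ hstep ih =>
        refine (TraceCon I).trans ih ?_
        obtain ⟨x, a, b, y, hI, rfl, rfl⟩ := hstep
        have hab : TraceCon I (FreeMonoid.of a * FreeMonoid.of b)
            (FreeMonoid.of b * FreeMonoid.of a) :=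
          ConGen.Rel.of _ _ ⟨a, b, hI, rfl, rfl⟩
        have : TraceCon I
            (FreeMonoid.ofList x * ((FreeMonoid.of a * FreeMonoid.of b) * FreeMonoid.ofList y))
            (FreeMonoid.ofList x * ((FreeMonoid.of b * FreeMonoid.of a) * FreeMonoid.ofList y)) :=
          (TraceCon I).mul ((TraceCon I).refl _) ((TraceCon I).mul hab ((TraceCon I).refl _))
        simpa only [FreeMonoid.ofList_append, FreeMonoid.ofList_cons, mul_assoc] using this
    have := key u.toList v.toList h
    simpa only [FreeMonoid.ofList_toList] using this

/-- Erase the first occurrence of a letter. -/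
noncomputable def erase1 (a : σ) : List σ → List σ
  | [] => []
  | b :: l => if b = a then l else b :: erase1 a l

theorem erase1_cons_self (a : σ) (l : List σ) : erase1 a (a :: l) = l := by
  simp [erase1]

theorem erase1_cons_ne {a b : σ} (h : b ≠ a) (l : List σ) :
    erase1 a (b :: l) = b :: erase1 a l := by
  simp [erase1, h]

theorem erase1_append_of_not_mem {a : σ} {x : List σ} (h : a ∉ x) (l : List σ) :
    erase1 a (x ++ l) = x ++ erase1 a l := by
  induction x with
  | nil => rfl
  | cons b x ih =>
    have hb : b ≠ a := fun e => h (e ▸ List.mem_cons_self)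
    have hx : a ∉ x := fun e => h (List.mem_cons_of_mem _ e)
    simp [erase1_cons_ne hb, ih hx]

theorem erase1_append_of_mem {a : σ} {x : List σ} (h : a ∈ x) (l : List σ) :
    erase1 a (x ++ l) = erase1 a x ++ l := by
  induction x with
  | nil => simp at h
  | cons b x ih =>
    by_cases hb : b = a
    · subst hb; simp [erase1_cons_self]
    · have hx : a ∈ x := by
        rcases List.mem_cons.1 h with h' | h'
        · exact absurd h'.symm hb
        · exact h'
      simp [erase1_cons_ne hb, ih hx]

theorem sstep_erase1 (hirr : Irreflexive I) (a : σ) {w₁ w₂ : List σ}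
    (h : SStep I w₁ w₂) : Equ I (erase1 a w₁) (erase1 a w₂) := by
  obtain ⟨x, b, c, y, hI, rfl, rfl⟩ := h
  by_cases hax : a ∈ x
  · rw [erase1_append_of_mem hax, erase1_append_of_mem hax]
    exact ReflTransGen.single ⟨erase1 a x, b, c, y, hI, rfl, rfl⟩
  · rw [erase1_append_of_not_mem hax, erase1_append_of_not_mem hax]
    have hbc : b ≠ c := fun e => hirr c (e ▸ hI)
    by_cases hb : b = a
    · subst hb
      have hc : c ≠ b := fun e => hbc e.symm
      rw [erase1_cons_self, erase1_cons_ne hc, erase1_cons_self]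
      exact equ_refl _
    · by_cases hc : c = a
      · subst hc
        rw [erase1_cons_ne hb, erase1_cons_self, erase1_cons_self]
        exact equ_refl _
      · rw [erase1_cons_ne hb, erase1_cons_ne hc, erase1_cons_ne hc, erase1_cons_ne hb]
        exact ReflTransGen.single ⟨x, b, c, erase1 a y, hI, rfl, rfl⟩

theorem equ_erase1 (hirr : Irreflexive I) (a : σ) {w₁ w₂ : List σ}
    (h : Equ I w₁ w₂) : Equ I (erase1 a w₁) (erase1 a w₂) := by
  induction h with
  | refl => exact equ_refl _
  | tail _ hstep ih => exact equ_trans ih (sstep_erase1 hirr a hstep)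

theorem equ_cancel (hirr : Irreflexive I) (a : σ) {m m' : List σ}
    (h : Equ I (a :: m) (a :: m')) : Equ I m m' := by
  have := equ_erase1 hirr a h
  rwa [erase1_cons_self, erase1_cons_self] at this

/-- `a` occurs in `w` with all letters before some occurrence commuting with `a`. -/
inductive MinLetter (I : σ → σ → Prop) (a : σ) : List σ → Prop
  | head (w : List σ) : MinLetter I a (a :: w)
  | cons {w : List σ} (b : σ) (h : I b a) (hm : MinLetter I a w) : MinLetter I a (b :: w)

theorem minLetter_sstep (hsym : Symmetric I) {a : σ} {w₁ w₂ : List σ}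
    (h : SStep I w₁ w₂) (hm : MinLetter I a w₁) : MinLetter I a w₂ := by
  obtain ⟨x, b, c, y, hI, rfl, rfl⟩ := h
  induction x with
  | nil =>
    cases hm with
    | head => exact MinLetter.cons c (hsym hI) (MinLetter.head _)
    | cons _ hb hm' =>
      cases hm' with
      | head => exact MinLetter.head _
      | cons _ hc hm'' => exact MinLetter.cons c hc (MinLetter.cons b hb hm'')
  | cons d x ih =>
    cases hm with
    | head => exact MinLetter.head _
    | cons _ hd hm' => exact MinLetter.cons d hd (ih hm')

theorem minLetter_equ (hsym : Symmetric I) {a : σ} {w₁ w₂ : List σ}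
    (h : Equ I w₁ w₂) (hm : MinLetter I a w₁) : MinLetter I a w₂ := by
  induction h with
  | refl => exact hm
  | tail _ hstep ih => exact minLetter_sstep hsym hstep ih

theorem minLetter_append {a : σ} {x y : List σ} (hm : MinLetter I a (x ++ y)) :
    MinLetter I a x ∨ ((∀ b ∈ x, I b a) ∧ MinLetter I a y) := by
  induction x with
  | nil => exact Or.inr ⟨by simp, hm⟩
  | cons b x ih =>
    cases hm with
    | head => exact Or.inl (MinLetter.head _)
    | cons _ hb hm' =>
      rcases ih hm' with h | ⟨hx, hy⟩
      · exact Or.inl (MinLetter.cons b hb h)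
      · refine Or.inr ⟨?_, hy⟩
        intro c hc
        rcases List.mem_cons.1 hc with rfl | hc
        · exact hb
        · exact hx c hc

theorem equ_cons_erase1_of_minLetter (hirr : Irreflexive I) {a : σ} {w : List σ}
    (hm : MinLetter I a w) : Equ I w (a :: erase1 a w) := by
  induction hm with
  | head w => rw [erase1_cons_self]; exact equ_refl _
  | cons b hb _ ih =>
    have hba : b ≠ a := fun e => hirr a (e ▸ hb)
    rw [erase1_cons_ne hba]
    refine equ_trans (equ_cons b ih) ?_
    exact ReflTransGen.single ⟨[], b, a, _, hb, rfl, rfl⟩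

theorem equ_comm_of_forall (hsym : Symmetric I) {a : σ} {x : List σ}
    (h : ∀ b ∈ x, I b a) : Equ I (a :: x) (x ++ [a]) := by
  induction x with
  | nil => exact equ_refl _
  | cons b x ih =>
    have h₁ : SStep I (a :: b :: x) (b :: a :: x) :=
      ⟨[], a, b, x, hsym (h b List.mem_cons_self), rfl, rfl⟩
    refine equ_trans (ReflTransGen.single h₁) ?_
    exact equ_cons b (ih fun c hc => h c (List.mem_cons_of_mem _ hc))

/-! ### Trace-level lemmas -/

theorem traceMk_eq_iff (hsym : Symmetric I) (u v : FreeMonoid σ) :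
    TraceMonoid.mk I u = TraceMonoid.mk I v ↔ Equ I u.toList v.toList :=
  (Con.eq _).trans (traceCon_iff hsym u v)

theorem alph_mk (u : FreeMonoid σ) : alph I (TraceMonoid.mk I u) = letterSet u := rfl

theorem alph_mul (x y : TraceMonoid σ I) : alph I (x * y) = alph I x ∪ alph I y := by
  obtain ⟨u, rfl⟩ := Con.mk'_surjective x
  obtain ⟨v, rfl⟩ := Con.mk'_surjective y
  show alph I (TraceMonoid.mk I u * TraceMonoid.mk I v) = _
  rw [← map_mul]
  exact letterSet_mul u v

theorem alph_one : alph I (1 : TraceMonoid σ I) = ∅ := by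
  have : (1 : TraceMonoid σ I) = TraceMonoid.mk I 1 := (map_one _).symm
  rw [this, alph_mk]
  ext a
  simp [letterSet, FreeMonoid.toList_one]

theorem trace_cancel (hsym : Symmetric I) (hirr : Irreflexive I) (a : σ)
    {X Y : TraceMonoid σ I}
    (h : TraceMonoid.mk I (FreeMonoid.of a) * X = TraceMonoid.mk I (FreeMonoid.of a) * Y) :
    X = Y := by
  obtain ⟨x, rfl⟩ := Con.mk'_surjective X
  obtain ⟨y, rfl⟩ := Con.mk'_surjective Y
  show TraceMonoid.mk I x = TraceMonoid.mk I y
  have h' : TraceMonoid.mk I (FreeMonoid.of a * x) = TraceMonoid.mk I (FreeMonoid.of a * y) := by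
    rw [map_mul, map_mul]; exact h
  rw [traceMk_eq_iff hsym] at h' ⊢
  simp only [FreeMonoid.toList_mul, FreeMonoid.toList_of] at h'
  exact equ_cancel hirr a h'

theorem trace_comm (hsym : Symmetric I) {a : σ} {X : TraceMonoid σ I}
    (h : ∀ b ∈ alph I X, I b a) :
    TraceMonoid.mk I (FreeMonoid.of a) * X = X * TraceMonoid.mk I (FreeMonoid.of a) := by
  obtain ⟨x, rfl⟩ := Con.mk'_surjective X
  show TraceMonoid.mk I (FreeMonoid.of a) * TraceMonoid.mk I x
      = TraceMonoid.mk I x * TraceMonoid.mk I (FreeMonoid.of a)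
  rw [← map_mul, ← map_mul, traceMk_eq_iff hsym]
  simp only [FreeMonoid.toList_mul, FreeMonoid.toList_of]
  exact equ_comm_of_forall hsym fun b hb => h b hb


theorem alph_mk_of (a : σ) : alph I (TraceMonoid.mk I (FreeMonoid.of a)) = {a} := by
  rw [alph_mk]
  ext b
  simp [letterSet, FreeMonoid.toList_of]

theorem traceMk_surj (x : TraceMonoid σ I) : ∃ u, x = TraceMonoid.mk I u := by
  obtain ⟨u, hu⟩ := Con.mk'_surjective x
  exact ⟨u, hu.symm⟩

theorem levi_aux (hsym : Symmetric I) (hirr : Irreflexive I) :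
    ∀ (vl : List σ) (t u w : TraceMonoid σ I),
      t * u = TraceMonoid.mk I (FreeMonoid.ofList vl) * w →
      ∃ p q r s : TraceMonoid σ I,
        t = p * r ∧ u = s * q ∧ TraceMonoid.mk I (FreeMonoid.ofList vl) = p * s ∧
        w = r * q ∧ r * s = s * r ∧ alph I r ∩ alph I s = ∅ := by
  intro vl
  induction vl with
  | nil =>
    intro t u w h
    have h1 : TraceMonoid.mk I (FreeMonoid.ofList ([] : List σ)) = 1 := map_one _
    refine ⟨1, u, t, 1, (one_mul t).symm, (one_mul u).symm, by rw [h1, one_mul], ?_,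
      by rw [one_mul, mul_one], by rw [alph_one, Set.inter_empty]⟩
    rw [h1, one_mul] at h
    exact h.symm
  | cons a vl ih =>
    intro t u w h
    obtain ⟨tw, rfl⟩ := traceMk_surj t
    obtain ⟨uw, rfl⟩ := traceMk_surj u
    obtain ⟨ww, rfl⟩ := traceMk_surj w
    have hsplit : TraceMonoid.mk I (FreeMonoid.ofList (a :: vl))
        = TraceMonoid.mk I (FreeMonoid.of a) * TraceMonoid.mk I (FreeMonoid.ofList vl) := by
      rw [← map_mul]
      rfl
    have h' : TraceMonoid.mk I (tw * uw)
        = TraceMonoid.mk I (FreeMonoid.ofList (a :: vl) * ww) := by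
      simpa only [map_mul] using h
    rw [traceMk_eq_iff hsym] at h'
    simp only [FreeMonoid.toList_mul, FreeMonoid.toList_ofList] at h'
    have h'' : Equ I (a :: (vl ++ ww.toList)) (tw.toList ++ uw.toList) := by
      refine equ_symm hsym ?_
      simpa only [List.cons_append] using h'
    have hmin : MinLetter I a (tw.toList ++ uw.toList) :=
      minLetter_equ hsym h'' (MinLetter.head _)
    rcases minLetter_append hmin with hA | ⟨hcomm, hB⟩
    · -- the letter `a` is minimal in `t`
      have ht : TraceMonoid.mk I tw = TraceMonoid.mk I (FreeMonoid.of a)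
          * TraceMonoid.mk I (FreeMonoid.ofList (erase1 a tw.toList)) := by
        rw [← map_mul, traceMk_eq_iff hsym]
        simp only [FreeMonoid.toList_mul, FreeMonoid.toList_of, FreeMonoid.toList_ofList]
        exact equ_cons_erase1_of_minLetter hirr hA
      set t₁ := TraceMonoid.mk I (FreeMonoid.ofList (erase1 a tw.toList)) with ht₁
      have h2 : TraceMonoid.mk I (FreeMonoid.of a) * (t₁ * TraceMonoid.mk I uw)
          = TraceMonoid.mk I (FreeMonoid.of a)
            * (TraceMonoid.mk I (FreeMonoid.ofList vl) * TraceMonoid.mk I ww) := by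
        rw [← mul_assoc, ← mul_assoc, ← ht, ← hsplit]
        exact h
      have h3 := trace_cancel hsym hirr a h2
      obtain ⟨p, q, r, s, e1, e2, e3, e4, e5, e6⟩ := ih t₁ (TraceMonoid.mk I uw)
        (TraceMonoid.mk I ww) h3
      refine ⟨TraceMonoid.mk I (FreeMonoid.of a) * p, q, r, s, ?_, e2, ?_, e4, e5, e6⟩
      · rw [ht, e1, mul_assoc]
      · rw [hsplit, e3, mul_assoc]
    · -- the letter `a` is minimal in `u` and commutes with `t`
      have hu : TraceMonoid.mk I uw = TraceMonoid.mk I (FreeMonoid.of a)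
          * TraceMonoid.mk I (FreeMonoid.ofList (erase1 a uw.toList)) := by
        rw [← map_mul, traceMk_eq_iff hsym]
        simp only [FreeMonoid.toList_mul, FreeMonoid.toList_of, FreeMonoid.toList_ofList]
        exact equ_cons_erase1_of_minLetter hirr hB
      set u₁ := TraceMonoid.mk I (FreeMonoid.ofList (erase1 a uw.toList)) with hu₁
      have hat : ∀ b ∈ alph I (TraceMonoid.mk I tw), I b a := by
        intro b hb
        exact hcomm b hb
      have hct : TraceMonoid.mk I (FreeMonoid.of a) * TraceMonoid.mk I tw
          = TraceMonoid.mk I tw * TraceMonoid.mk I (FreeMonoid.of a) := trace_comm hsym hat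
      have h2 : TraceMonoid.mk I (FreeMonoid.of a) * (TraceMonoid.mk I tw * u₁)
          = TraceMonoid.mk I (FreeMonoid.of a)
            * (TraceMonoid.mk I (FreeMonoid.ofList vl) * TraceMonoid.mk I ww) := by
        rw [← mul_assoc, hct, mul_assoc, ← hu, ← mul_assoc, ← hsplit]
        exact h
      have h3 := trace_cancel hsym hirr a h2
      obtain ⟨p, q, r, s, e1, e2, e3, e4, e5, e6⟩ := ih (TraceMonoid.mk I tw) u₁
        (TraceMonoid.mk I ww) h3
      have halphpr : alph I p ∪ alph I r = alph I (TraceMonoid.mk I tw) := by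
        rw [e1, alph_mul]
      have hap : ∀ b ∈ alph I p, I b a := fun b hb =>
        hat b (halphpr ▸ Set.mem_union_left _ hb)
      have har : ∀ b ∈ alph I r, I b a := fun b hb =>
        hat b (halphpr ▸ Set.mem_union_right _ hb)
      have hanr : a ∉ alph I r := fun ha => hirr a (har a ha)
      have hcp : TraceMonoid.mk I (FreeMonoid.of a) * p
          = p * TraceMonoid.mk I (FreeMonoid.of a) := trace_comm hsym hap
      have hcr : TraceMonoid.mk I (FreeMonoid.of a) * r
          = r * TraceMonoid.mk I (FreeMonoid.of a) := trace_comm hsym har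
      refine ⟨p, q, r, TraceMonoid.mk I (FreeMonoid.of a) * s, e1, ?_, ?_, e4, ?_, ?_⟩
      · rw [hu, e2, mul_assoc]
      · rw [hsplit, e3, ← mul_assoc, hcp, mul_assoc]
      · rw [← mul_assoc, ← hcr, mul_assoc, e5, ← mul_assoc]
      · rw [alph_mul, alph_mk_of]
        apply Set.eq_empty_iff_forall_notMem.2
        rintro b ⟨hbr, hb⟩
        rcases hb with hb | hb
        · exact hanr (hb ▸ hbr)
        · exact Set.eq_empty_iff_forall_notMem.1 e6 b ⟨hbr, hb⟩

end LeviAux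

/-- **Levi's Lemma** for free partially commutative monoids: `tu = vw` iff there exist
`p, q, r, s` with `t = pr`, `u = sq`, `v = ps`, `w = rq`, `rs = sr` and
`alph(r) ∩ alph(s) = ∅`. -/
theorem levi_lemma {σ : Type*} [Fintype σ] (I : σ → σ → Prop)
    (hsym : Symmetric I) (hirr : Irreflexive I) (t u v w : TraceMonoid σ I) :
    t * u = v * w ↔ ∃ p q r s : TraceMonoid σ I,
      t = p * r ∧ u = s * q ∧ v = p * s ∧ w = r * q ∧
      r * s = s * r ∧ alph I r ∩ alph I s = ∅ := by
  constructor
  · intro h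
    obtain ⟨vw', rfl⟩ := traceMk_surj v
    have hv : TraceMonoid.mk I vw'
        = TraceMonoid.mk I (FreeMonoid.ofList vw'.toList) := by
      rw [FreeMonoid.ofList_toList]
    rw [hv] at h ⊢
    exact levi_aux hsym hirr vw'.toList t u w h
  · rintro ⟨p, q, r, s, rfl, rfl, rfl, rfl, hc, -⟩
    rw [mul_assoc p r, ← mul_assoc r s q, hc, mul_assoc s r q, ← mul_assoc p s]
end

section
/- Let Σ be a finite totally ordered set and M(Σ,I) a free partially commutative monoid. Every element of M(Σ,I) has a unique Foata normal form; that is, for every nonempty x ∈ M(Σ,I) there exist a unique integer n > 0 and unique nonempty words x_1, …, x_n ∈ Σ* such that x = x_1x_2⋯x_n in M(Σ,I), each x_i is a product of distinct pairwise commuting letters written in increasing order, and for each 1 ≤ i < n and each letter a of x_{i+1} there is a letter b of x_i with (a,b) ∉ I. -/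
open scoped Classical

namespace FoataAux

open List

variable {σ : Type*} [LinearOrder σ]

/-- Insert a letter `a` into a Foata normal form. -/
noncomputable def finsert (I : σ → σ → Prop) (a : σ) : List (List σ) → List (List σ)
  | [] => [[a]]
  | w :: F =>
      if ∀ c ∈ w ++ F.flatten, I a c then List.orderedInsert (· ≤ ·) a w :: F
      else w :: finsert I a F

noncomputable def fold (I : σ → σ → Prop) (F : List (List σ)) (u : List σ) :
    List (List σ) :=
  u.foldl (fun G a => finsert I a G) F

noncomputable def foata (I : σ → σ → Prop) (u : List σ) : List (List σ) := fold I [] u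

variable (I : σ → σ → Prop)

/-- A valid block: nonempty, strictly increasing, pairwise commuting letters. -/
def Blk (w : List σ) : Prop :=
  w ≠ [] ∧ w.Chain' (· < ·) ∧ ∀ a ∈ w, ∀ b ∈ w, a ≠ b → I a b

/-- The adjacency condition between consecutive blocks. -/
def Nxt (u v : List σ) : Prop := ∀ a ∈ v, ∃ b ∈ u, ¬ I a b

/-- A valid Foata normal form. -/
def IsForm (F : List (List σ)) : Prop :=
  (∀ w ∈ F, Blk I w) ∧ F.Chain' (Nxt I)

lemma isForm_nil : IsForm I ([] : List (List σ)) := ⟨by simp, isChain_nil⟩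

lemma isForm_cons {w F} (h : IsForm I (w :: F)) : IsForm I F :=
  ⟨fun v hv => h.1 v (mem_cons_of_mem _ hv), h.2.tail⟩

variable {I}

lemma finsert_nil (a : σ) : finsert I a [] = [[a]] := by simp [finsert]

lemma finsert_pos {a : σ} {w : List σ} {F : List (List σ)}
    (h : ∀ c ∈ w ++ F.flatten, I a c) :
    finsert I a (w :: F) = List.orderedInsert (· ≤ ·) a w :: F := by
  rw [finsert, if_pos h]

lemma finsert_neg {a : σ} {w : List σ} {F : List (List σ)}
    (h : ¬ ∀ c ∈ w ++ F.flatten, I a c) :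
    finsert I a (w :: F) = w :: finsert I a F := by
  rw [finsert, if_neg h]

lemma flatten_finsert_perm (a : σ) (F : List (List σ)) :
    (finsert I a F).flatten ~ a :: F.flatten := by
  induction F with
  | nil => simp [finsert]
  | cons w F ih =>
      by_cases h : ∀ c ∈ w ++ F.flatten, I a c
      · rw [finsert_pos h]
        simp only [flatten_cons]
        exact (List.perm_orderedInsert _ _ _).append_right _
      · rw [finsert_neg h]
        simp only [flatten_cons]
        calc w ++ (finsert I a F).flatten ~ w ++ (a :: F.flatten) := (ih).append_left w
          _ ~ a :: (w ++ F.flatten) := List.perm_middle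

lemma flatten_fold_perm (F : List (List σ)) (u : List σ) :
    (fold I F u).flatten ~ u ++ F.flatten := by
  induction u generalizing F with
  | nil => simp [fold]
  | cons a u ih =>
      show (fold I (finsert I a F) u).flatten ~ _
      calc (fold I (finsert I a F) u).flatten
          ~ u ++ (finsert I a F).flatten := ih _
        _ ~ u ++ (a :: F.flatten) := ((flatten_finsert_perm a F).append_left u)
        _ ~ a :: (u ++ F.flatten) := List.perm_middle



lemma chain'_lt_iff_sorted {w : List σ} : w.Chain' (· < ·) ↔ w.Pairwise (· < ·) :=
  List.isChain_iff_pairwise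

lemma sorted_le_of_chain' {w : List σ} (h : w.Chain' (· < ·)) : w.Pairwise (· ≤ ·) :=
  (chain'_lt_iff_sorted.1 h).imp le_of_lt

lemma blk_orderedInsert (hirr : Irreflexive I) (hsym : Symmetric I)
    {w : List σ} (hblk : Blk I w) {a : σ} (hc : ∀ c ∈ w, I a c) :
    Blk I (List.orderedInsert (· ≤ ·) a w) := by
  obtain ⟨hne, hch, hcomm⟩ := hblk
  have hperm := List.perm_orderedInsert (· ≤ ·) a w
  have hmem : ∀ x, x ∈ List.orderedInsert (· ≤ ·) a w ↔ x = a ∨ x ∈ w := by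
    intro x; rw [hperm.mem_iff, mem_cons]
  have hanotmem : a ∉ w := fun hmem => hirr a (hc a hmem)
  refine ⟨?_, ?_, ?_⟩
  · intro h
    have := hperm.length_eq
    rw [h] at this
    simp at this
  · rw [chain'_lt_iff_sorted]
    have hsortle : (List.orderedInsert (· ≤ ·) a w).Pairwise (· ≤ ·) :=
      List.Pairwise.orderedInsert a w (sorted_le_of_chain' hch)
    have hnd : (List.orderedInsert (· ≤ ·) a w).Nodup :=
      hperm.nodup_iff.2 (List.nodup_cons.2 ⟨hanotmem,
        (chain'_lt_iff_sorted.1 hch).nodup⟩)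
    exact (List.pairwise_and_iff.2 ⟨hsortle, hnd⟩).imp fun h => lt_of_le_of_ne h.1 h.2
  · intro x hx y hy hxy
    rw [hmem] at hx hy
    rcases hx with rfl | hx
    · rcases hy with rfl | hy
      · exact absurd rfl hxy
      · exact hc y hy
    · rcases hy with rfl | hy
      · exact hsym (hc x hx)
      · exact hcomm x hx y hy hxy

lemma blk_singleton (a : σ) : Blk I [a] := by
  refine ⟨by simp, isChain_singleton _, ?_⟩
  intro x hx y hy hxy
  simp only [mem_singleton] at hx hy
  exact absurd (hx.trans hy.symm) hxy

lemma isForm_finsert (hirr : Irreflexive I) (hsym : Symmetric I)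
    (a : σ) {F : List (List σ)} (hF : IsForm I F) : IsForm I (finsert I a F) := by
  induction F with
  | nil =>
      rw [finsert_nil]
      exact ⟨fun w hw => (mem_singleton.1 hw) ▸ blk_singleton a, isChain_singleton _⟩
  | cons w F ih =>
      obtain ⟨hblk, hch⟩ := hF
      have hFform : IsForm I F := ⟨fun v hv => hblk v (mem_cons_of_mem _ hv), hch.tail⟩
      by_cases h : ∀ c ∈ w ++ F.flatten, I a c
      · rw [finsert_pos h]
        refine ⟨?_, ?_⟩
        · intro v hv
          rcases mem_cons.1 hv with rfl | hv
          · exact blk_orderedInsert hirr hsym (hblk w (mem_cons_self))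
              (fun c hc => h c (mem_append_left _ hc))
          · exact hblk v (mem_cons_of_mem _ hv)
        · unfold List.Chain' at hch ⊢
          rw [isChain_cons] at hch ⊢
          refine ⟨?_, hch.2⟩
          intro y hy c hc
          obtain ⟨b, hb, hbc⟩ := hch.1 y hy c hc
          exact ⟨b, ((List.perm_orderedInsert (· ≤ ·) a w).mem_iff).2
            (mem_cons_of_mem _ hb), hbc⟩
      · rw [finsert_neg h]
        have ihF := ih hFform
        refine ⟨?_, ?_⟩
        · intro v hv
          rcases mem_cons.1 hv with rfl | hv
          · exact hblk v (mem_cons_self)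
          · exact ihF.1 v hv
        · unfold List.Chain'
          rw [isChain_cons]
          refine ⟨?_, ihF.2⟩
          intro y hy
          cases F with
          | nil =>
              rw [finsert_nil] at hy
              simp only [head?_cons, Option.mem_def, Option.some.injEq] at hy
              subst hy
              intro c hc
              simp only [mem_singleton] at hc
              subst hc
              push_neg at h
              obtain ⟨b, hb, hbc⟩ := h
              simp only [flatten_nil, append_nil] at hb
              exact ⟨b, hb, hbc⟩
          | cons w' F' =>
              have hnxt : Nxt I w w' := (isChain_cons_cons.1 hch).1
              by_cases h2 : ∀ c ∈ w' ++ F'.flatten, I a c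
              · rw [finsert_pos h2] at hy
                simp only [head?_cons, Option.mem_def, Option.some.injEq] at hy
                subst hy
                intro c hc
                rcases mem_cons.1
                    (((List.perm_orderedInsert (· ≤ ·) a w').mem_iff).1 hc) with rfl | hc
                · push_neg at h
                  obtain ⟨b, hb, hbc⟩ := h
                  rcases mem_append.1 hb with hb | hb
                  · exact ⟨b, hb, hbc⟩
                  · exact absurd (h2 b (by
                      simp only [flatten_cons] at hb
                      exact hb)) hbc
                · exact hnxt c hc
              · rw [finsert_neg h2] at hy
                simp only [head?_cons, Option.mem_def, Option.some.injEq] at hy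
                subst hy
                exact hnxt



lemma finsert_comm_aux1 {a b : σ} (hab : I a b) {w : List σ} {F : List (List σ)}
    (ha : ∀ c ∈ w ++ F.flatten, I a c) (hb : ¬ ∀ c ∈ w ++ F.flatten, I b c) :
    finsert I a (finsert I b (w :: F)) =
      List.orderedInsert (· ≤ ·) a w :: finsert I b F := by
  rw [finsert_neg hb, finsert_pos]
  intro c hc
  rcases mem_append.1 hc with hc | hc
  · exact ha c (mem_append_left _ hc)
  · rcases mem_cons.1 ((flatten_finsert_perm b F).mem_iff.1 hc) with rfl | hc
    · exact hab
    · exact ha c (mem_append_right _ hc)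

lemma finsert_comm_aux2 {a b : σ} {w : List σ} {F : List (List σ)}
    (ha : ∀ c ∈ w ++ F.flatten, I a c) (hb : ¬ ∀ c ∈ w ++ F.flatten, I b c) :
    finsert I b (finsert I a (w :: F)) =
      List.orderedInsert (· ≤ ·) a w :: finsert I b F := by
  rw [finsert_pos ha, finsert_neg]
  intro hcon
  apply hb
  intro c hc
  apply hcon
  rcases mem_append.1 hc with hc | hc
  · exact mem_append_left _ (((List.perm_orderedInsert (· ≤ ·) a w).mem_iff).2
      (mem_cons_of_mem _ hc))
  · exact mem_append_right _ hc

lemma finsert_comm (hirr : Irreflexive I) (hsym : Symmetric I) {a b : σ} (hab : I a b)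
    {F : List (List σ)} (hF : IsForm I F) :
    finsert I a (finsert I b F) = finsert I b (finsert I a F) := by
  have hne : a ≠ b := fun h => hirr a (h ▸ hab)
  induction F with
  | nil =>
      rw [finsert_nil, finsert_nil, finsert_pos (by simpa using hab),
        finsert_pos (by simpa using hsym hab)]
      rcases lt_or_gt_of_ne hne with h | h
      · simp [List.orderedInsert, h.le, not_le.2 h]
      · simp [List.orderedInsert, h.le, not_le.2 h]
  | cons w F ih =>
      have hFform := isForm_cons I hF
      by_cases ha : ∀ c ∈ w ++ F.flatten, I a c <;>
        by_cases hb : ∀ c ∈ w ++ F.flatten, I b c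
      · -- both insert into this block
        rw [finsert_pos hb, finsert_pos ha, finsert_pos, finsert_pos]
        · congr 1
          have hw : w.Pairwise (· ≤ ·) := sorted_le_of_chain' (hF.1 w (mem_cons_self)).2.1
          have h1 : (List.orderedInsert (· ≤ ·) a (List.orderedInsert (· ≤ ·) b w)).Pairwise (· ≤ ·) :=
            List.Pairwise.orderedInsert _ _ (List.Pairwise.orderedInsert _ _ hw)
          have h2 : (List.orderedInsert (· ≤ ·) b (List.orderedInsert (· ≤ ·) a w)).Pairwise (· ≤ ·) :=
            List.Pairwise.orderedInsert _ _ (List.Pairwise.orderedInsert _ _ hw)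
          refine List.Perm.eq_of_pairwise' h1 h2 ?_
          calc List.orderedInsert (· ≤ ·) a (List.orderedInsert (· ≤ ·) b w)
              ~ a :: List.orderedInsert (· ≤ ·) b w := List.perm_orderedInsert _ _ _
            _ ~ a :: b :: w := (List.perm_orderedInsert _ _ _).cons a
            _ ~ b :: a :: w := Perm.swap _ _ _
            _ ~ b :: List.orderedInsert (· ≤ ·) a w := ((List.perm_orderedInsert _ _ _).cons b).symm
            _ ~ List.orderedInsert (· ≤ ·) b (List.orderedInsert (· ≤ ·) a w) :=
                (List.perm_orderedInsert _ _ _).symm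
        · intro c hc
          rcases mem_append.1 hc with hc | hc
          · rcases mem_cons.1 (((List.perm_orderedInsert (· ≤ ·) a w).mem_iff).1 hc) with rfl | hc
            · exact hsym hab
            · exact hb c (mem_append_left _ hc)
          · exact hb c (mem_append_right _ hc)
        · intro c hc
          rcases mem_append.1 hc with hc | hc
          · rcases mem_cons.1 (((List.perm_orderedInsert (· ≤ ·) b w).mem_iff).1 hc) with rfl | hc
            · exact hab
            · exact ha c (mem_append_left _ hc)
          · exact ha c (mem_append_right _ hc)
      · exact (finsert_comm_aux1 hab ha hb).trans (finsert_comm_aux2 ha hb).symm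
      · exact (finsert_comm_aux2 hb ha).trans (finsert_comm_aux1 (hsym hab) hb ha).symm
      · rw [finsert_neg ha, finsert_neg hb, finsert_neg, finsert_neg]
        · rw [ih hFform]
        · intro hcon
          apply hb
          intro c hc
          apply hcon
          rcases mem_append.1 hc with hc | hc
          · exact mem_append_left _ hc
          · exact mem_append_right _ ((flatten_finsert_perm a F).mem_iff.2 (mem_cons_of_mem _ hc))
        · intro hcon
          apply ha
          intro c hc
          apply hcon
          rcases mem_append.1 hc with hc | hc
          · exact mem_append_left _ hc
          · exact mem_append_right _ ((flatten_finsert_perm b F).mem_iff.2 (mem_cons_of_mem _ hc))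


lemma fold_append (F : List (List σ)) (u v : List σ) :
    fold I F (u ++ v) = fold I (fold I F u) v :=
  List.foldl_append ..

lemma isForm_fold (hirr : Irreflexive I) (hsym : Symmetric I)
    {F : List (List σ)} (hF : IsForm I F) (u : List σ) : IsForm I (fold I F u) := by
  induction u generalizing F with
  | nil => exact hF
  | cons a u ih => exact ih (isForm_finsert hirr hsym a hF)

/-- The function `fold` as factoring through a congruence. -/
noncomputable def foataCon (I : σ → σ → Prop) (hirr : Irreflexive I) (hsym : Symmetric I) :
    Con (FreeMonoid σ) where
  r u v := ∀ F, IsForm I F → fold I F (FreeMonoid.toList u) = fold I F (FreeMonoid.toList v)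
  iseqv := ⟨fun _ _ _ => rfl, fun h F hF => (h F hF).symm,
    fun h1 h2 F hF => (h1 F hF).trans (h2 F hF)⟩
  mul' := by
    intro w x y z h1 h2 F hF
    simp only [FreeMonoid.toList_mul]
    rw [fold_append, fold_append, h1 F hF, h2 _ (isForm_fold hirr hsym hF _)]

lemma traceCon_le (hirr : Irreflexive I) (hsym : Symmetric I) :
    TraceCon I ≤ foataCon I hirr hsym := by
  refine Con.conGen_le.2 ?_
  rintro u v ⟨a, b, hab, rfl, rfl⟩ F hF
  show fold I F [a, b] = fold I F [b, a]
  show finsert I b (finsert I a F) = finsert I a (finsert I b F)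
  exact (finsert_comm hirr hsym hab hF).symm

lemma foata_eq_of_traceCon (hirr : Irreflexive I) (hsym : Symmetric I)
    {u v : FreeMonoid σ} (h : TraceCon I u v) :
    foata I (FreeMonoid.toList u) = foata I (FreeMonoid.toList v) :=
  traceCon_le hirr hsym h [] (isForm_nil I)

/-- Abbreviation: class of a word in the trace monoid. -/
noncomputable def mkl (I : σ → σ → Prop) (l : List σ) : TraceMonoid σ I :=
  TraceMonoid.mk I (FreeMonoid.ofList l)

lemma mkl_append (l1 l2 : List σ) : mkl I (l1 ++ l2) = mkl I l1 * mkl I l2 := by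
  rw [mkl, FreeMonoid.ofList_append, map_mul]; rfl

lemma mkl_nil : mkl I ([] : List σ) = 1 := rfl

lemma mk_swap (hsym : Symmetric I) {a c : σ} (hac : I a c) :
    mkl I [a, c] = mkl I [c, a] := by
  show TraceMonoid.mk I (FreeMonoid.of a * FreeMonoid.of c) =
    TraceMonoid.mk I (FreeMonoid.of c * FreeMonoid.of a)
  exact Quotient.sound (ConGen.Rel.of _ _ ⟨a, c, hac, rfl, rfl⟩)

lemma mkl_commute (hsym : Symmetric I) {a : σ} {l : List σ} (h : ∀ c ∈ l, I a c) :
    mkl I (a :: l) = mkl I (l ++ [a]) := by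
  induction l with
  | nil => rfl
  | cons c l ih =>
      have h1 : mkl I (a :: c :: l) = mkl I (c :: a :: l) := by
        have : mkl I ([a, c] ++ l) = mkl I ([c, a] ++ l) := by
          rw [mkl_append, mkl_append, mk_swap hsym (h c (mem_cons_self))]
        simpa using this
      rw [h1]
      show mkl I ([c] ++ (a :: l)) = mkl I ([c] ++ (l ++ [a]))
      rw [mkl_append, mkl_append, ih (fun x hx => h x (mem_cons_of_mem _ hx))]

lemma mkl_flatten_finsert (hsym : Symmetric I) (a : σ) (F : List (List σ)) :
    mkl I (finsert I a F).flatten = mkl I F.flatten * mkl I [a] := by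
  induction F with
  | nil =>
      rw [finsert_nil]
      show mkl I ([a] ++ []) = mkl I [] * mkl I [a]
      rw [mkl_nil, one_mul]; simp
  | cons w F ih =>
      by_cases h : ∀ c ∈ w ++ F.flatten, I a c
      · rw [finsert_pos h]
        simp only [flatten_cons]
        rw [List.orderedInsert_eq_take_drop]
        set tw := w.takeWhile fun b => ¬ a ≤ b with htw
        set dw := w.dropWhile fun b => ¬ a ≤ b with hdw
        have hwd : tw ++ dw = w := List.takeWhile_append_dropWhile
        have hmove : mkl I (a :: (dw ++ F.flatten)) = mkl I ((dw ++ F.flatten) ++ [a]) := by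
          refine mkl_commute hsym ?_
          intro c hc
          rcases mem_append.1 hc with hc | hc
          · exact h c (mem_append_left _ (by rw [← hwd]; exact mem_append_right _ hc))
          · exact h c (mem_append_right _ hc)
        calc mkl I ((tw ++ a :: dw) ++ F.flatten)
            = mkl I (tw ++ (a :: (dw ++ F.flatten))) := by simp
          _ = mkl I tw * mkl I (a :: (dw ++ F.flatten)) := mkl_append _ _
          _ = mkl I tw * mkl I ((dw ++ F.flatten) ++ [a]) := by rw [hmove]
          _ = mkl I (tw ++ ((dw ++ F.flatten) ++ [a])) := (mkl_append _ _).symm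
          _ = mkl I ((w ++ F.flatten) ++ [a]) := by rw [← hwd]; simp
          _ = mkl I (w ++ F.flatten) * mkl I [a] := mkl_append _ _
      · rw [finsert_neg h]
        simp only [flatten_cons]
        rw [mkl_append, ih, mkl_append, mul_assoc]

lemma mkl_flatten_fold (hsym : Symmetric I) (F : List (List σ)) (u : List σ) :
    mkl I (fold I F u).flatten = mkl I F.flatten * mkl I u := by
  induction u generalizing F with
  | nil => simp [fold, mkl_nil]
  | cons a u ih =>
      show mkl I (fold I (finsert I a F) u).flatten = _
      rw [ih, mkl_flatten_finsert hsym]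
      have : mkl I (a :: u) = mkl I [a] * mkl I u := by
        rw [show a :: u = [a] ++ u from rfl, mkl_append]
      rw [this, mul_assoc]

lemma mkl_flatten_foata (hsym : Symmetric I) (u : List σ) :
    mkl I (foata I u).flatten = mkl I u := by
  rw [foata, mkl_flatten_fold hsym]
  simp [mkl_nil]

lemma prod_map_mkl (L : List (List σ)) :
    (L.map fun w => TraceMonoid.mk I (FreeMonoid.ofList w)).prod = mkl I L.flatten := by
  induction L with
  | nil => simp [mkl_nil]
  | cons w L ih => simp [flatten_cons, mkl_append, ih]; rfl


lemma finsert_of_blocked {F : List (List σ)} (hne : F ≠ []) {a : σ}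
    (h : ∃ c ∈ F.getLast hne, ¬ I a c) : finsert I a F = F ++ [[a]] := by
  induction F with
  | nil => exact absurd rfl hne
  | cons w F ih =>
      cases F with
      | nil =>
          simp only [getLast_singleton] at h
          obtain ⟨c, hc, hnc⟩ := h
          rw [finsert_neg (fun hcon => hnc (hcon c (by simpa using hc))), finsert_nil]
          rfl
      | cons w' F' =>
          rw [getLast_cons (by simp)] at h
          obtain ⟨c, hc, hnc⟩ := h
          rw [finsert_neg, ih (by simp)]
          · simp
          · exact ⟨c, hc, hnc⟩
          · intro hcon
            apply hnc
            apply hcon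
            apply mem_append_right
            rw [mem_flatten]
            exact ⟨(w' :: F').getLast (by simp), getLast_mem _, hc⟩

lemma finsert_into_last {G : List (List σ)} {p : List σ} {a : σ}
    (hp : ∀ c ∈ p, I a c)
    (hG : ∀ g, G.getLast? = some g → ∃ c ∈ g, ¬ I a c) :
    finsert I a (G ++ [p]) = G ++ [List.orderedInsert (· ≤ ·) a p] := by
  induction G with
  | nil =>
      simp only [nil_append]
      rw [finsert_pos (by simpa using hp)]
  | cons g G ih =>
      have hgG : (g :: G) ≠ [] := by simp
      obtain ⟨c, hc, hnc⟩ := hG ((g :: G).getLast hgG) (getLast?_eq_getLast hgG)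
      rw [cons_append, finsert_neg, ih]
      · simp
      · intro g' hg'
        apply hG
        cases G with
        | nil => simp at hg'
        | cons x G' => rw [getLast?_cons_cons]; exact hg'
      · intro hcon
        apply hnc
        apply hcon
        have : c ∈ (g :: G).flatten := mem_flatten.2 ⟨_, getLast_mem hgG, hc⟩
        rcases mem_append.1 (by simpa using this : c ∈ g ++ G.flatten) with h1 | h1
        · exact mem_append_left _ h1
        · exact mem_append_right _ (by
            rw [flatten_append]
            exact mem_append_left _ h1)

lemma orderedInsert_eq_append {p : List σ} {a : σ} (h : ∀ c ∈ p, c < a) :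
    List.orderedInsert (· ≤ ·) a p = p ++ [a] := by
  induction p with
  | nil => rfl
  | cons c p ih =>
      rw [List.orderedInsert]
      rw [if_neg (not_le.2 (h c (mem_cons_self)))]
      rw [ih (fun x hx => h x (mem_cons_of_mem _ hx))]
      rfl

lemma fold_block (ws : List σ) : ∀ (G : List (List σ)) (p : List σ), p ≠ [] →
    (∀ b ∈ ws, ∀ c ∈ p, I b c ∧ c < b) →
    (∀ a ∈ ws, ∀ b ∈ ws, a ≠ b → I a b) → ws.Chain' (· < ·) →
    (∀ b ∈ ws, ∀ g, G.getLast? = some g → ∃ c ∈ g, ¬ I b c) →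
    fold I (G ++ [p]) ws = G ++ [p ++ ws] := by
  induction ws with
  | nil => intro G p _ _ _ _ _; simp [fold]
  | cons a ws ih =>
      intro G p hp h1 h2 h3 h4
      have hlt : ∀ b ∈ ws, a < b := by
        have := chain'_lt_iff_sorted.1 h3
        intro b hb
        exact rel_of_pairwise_cons this hb
      show fold I (finsert I a (G ++ [p])) ws = _
      rw [finsert_into_last (fun c hc => (h1 a (mem_cons_self) c hc).1)
        (h4 a (mem_cons_self)),
        orderedInsert_eq_append (fun c hc => (h1 a (mem_cons_self) c hc).2)]
      rw [ih G (p ++ [a]) (by simp) ?h1 ?h2 h3.tail ?h4]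
      · simp
      case h1 =>
        intro b hb c hc
        rcases mem_append.1 hc with hc | hc
        · exact h1 b (mem_cons_of_mem _ hb) c hc
        · rcases mem_singleton.1 hc with rfl
          exact ⟨h2 b (mem_cons_of_mem _ hb) c (mem_cons_self) (hlt b hb).ne',
            hlt b hb⟩
      case h2 =>
        intro x hx y hy
        exact h2 x (mem_cons_of_mem _ hx) y (mem_cons_of_mem _ hy)
      case h4 =>
        intro b hb
        exact h4 b (mem_cons_of_mem _ hb)

lemma foata_flatten (L : List (List σ)) : L ≠ [] → (∀ w ∈ L, Blk I w) →
    L.Chain' (Nxt I) → foata I L.flatten = L := by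
  induction L using List.reverseRecOn with
  | nil => intro h; exact absurd rfl h
  | append_singleton M w ihM =>
      intro _ hblk hch
      have hblkw : Blk I w := hblk w (by simp)
      obtain ⟨a, t, rfl⟩ : ∃ a t, w = a :: t := by
        cases w with
        | nil => exact absurd rfl hblkw.1
        | cons a t => exact ⟨a, t, rfl⟩
      have hpw : Pairwise (· < ·) (a :: t) := chain'_lt_iff_sorted.1 hblkw.2.1
      have hlt : ∀ b ∈ t, a < b := fun b hb => rel_of_pairwise_cons hpw hb
      have hflat : (M ++ [a :: t]).flatten = M.flatten ++ (a :: t) := by simp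
      rw [hflat]
      show fold I [] (M.flatten ++ (a :: t)) = _
      rw [fold_append]
      rcases eq_or_ne M [] with rfl | hM
      · simp only [flatten_nil, nil_append]
        show fold I (finsert I a (fold I [] [])) t = _
        show fold I (finsert I a []) t = _
        rw [finsert_nil]
        have := fold_block (I := I) t [] [a] (by simp) ?h1 ?h2 ?h3 ?h4
        · simpa using this
        case h1 =>
          intro b hb c hc
          rcases mem_singleton.1 hc with rfl
          exact ⟨hblkw.2.2 b (mem_cons_of_mem _ hb) c (mem_cons_self) (hlt b hb).ne',
            hlt b hb⟩
        case h2 =>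
          intro x hx y hy
          exact hblkw.2.2 x (mem_cons_of_mem _ hx) y (mem_cons_of_mem _ hy)
        case h3 => exact hblkw.2.1.tail
        case h4 => intro b _ g hg; simp at hg
      · -- M nonempty
        obtain ⟨hchM, -, hlast⟩ := isChain_append.1 hch
        have hnxt : Nxt I (M.getLast hM) (a :: t) := by
          have h1 := hlast (M.getLast hM) (by rw [getLast?_eq_getLast hM]; rfl)
            (a :: t) rfl
          exact h1
        rw [show fold I [] M.flatten = M from ihM hM
          (fun v hv => hblk v (mem_append_left _ hv)) hchM]
        show fold I (finsert I a M) t = _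
        rw [finsert_of_blocked hM (hnxt a (mem_cons_self))]
        have := fold_block (I := I) t M [a] (by simp) ?h1 ?h2 ?h3 ?h4
        · simpa using this
        case h1 =>
          intro b hb c hc
          rcases mem_singleton.1 hc with rfl
          exact ⟨hblkw.2.2 b (mem_cons_of_mem _ hb) c (mem_cons_self) (hlt b hb).ne',
            hlt b hb⟩
        case h2 =>
          intro x hx y hy
          exact hblkw.2.2 x (mem_cons_of_mem _ hx) y (mem_cons_of_mem _ hy)
        case h3 => exact hblkw.2.1.tail
        case h4 =>
          intro b hb g hg
          rw [getLast?_eq_getLast hM] at hg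
          cases Option.some.inj hg
          exact hnxt b (mem_cons_of_mem _ hb)

end FoataAux

/-- **Existence and uniqueness of the Foata normal form.** For every nonempty element `x`
of `M(Σ, I)` (with `Σ` finite totally ordered) there is a unique nonempty list of words
`x₁, …, xₙ` such that `x = x₁x₂⋯xₙ` in `M(Σ,I)`, each `xᵢ` is a nonempty product of
distinct pairwise commuting letters written in (strictly) increasing order, and for each
`i < n` and each letter `a` of `x_{i+1}` there is a letter `b` of `xᵢ` with `(a,b) ∉ I`. -/
theorem foata_normal_form {σ : Type*} [Fintype σ] [LinearOrder σ] (I : σ → σ → Prop)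
    (hsym : Symmetric I) (hirr : Irreflexive I) (x : TraceMonoid σ I) (hx : x ≠ 1) :
    ∃! L : List (List σ),
      (L ≠ [] ∧
        (∀ w ∈ L, w ≠ [] ∧ w.Chain' (· < ·) ∧ ∀ a ∈ w, ∀ b ∈ w, a ≠ b → I a b) ∧
        (∀ (i : ℕ) (h : i + 1 < L.length), ∀ a ∈ L[i+1]'h,
          ∃ b ∈ L[i]'(Nat.lt_of_succ_lt h), ¬ I a b)) ∧
      (L.map fun w => TraceMonoid.mk I (FreeMonoid.ofList w)).prod = x := by
  obtain ⟨u, rfl⟩ := Con.mk'_surjective x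
  set l := FreeMonoid.toList u with hldef
  have hu : FreeMonoid.ofList l = u := rfl
  have hlne : l ≠ [] := by
    intro h
    apply hx
    have h1 : u = 1 := by rw [← hu, h]; rfl
    rw [h1, map_one]
  have hform : FoataAux.IsForm I (FoataAux.foata I l) :=
    FoataAux.isForm_fold hirr hsym (FoataAux.isForm_nil I) l
  have hflatperm : (FoataAux.foata I l).flatten.Perm l := by
    simpa [FoataAux.foata] using FoataAux.flatten_fold_perm (I := I) [] l
  have hLne : FoataAux.foata I l ≠ [] := by
    intro h
    rw [h] at hflatperm
    exact hlne hflatperm.nil_eq.symm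
  have hmk : FoataAux.mkl I l = Con.mk' (TraceCon I) u := rfl
  refine ⟨FoataAux.foata I l, ⟨⟨hLne, fun w hw => hform.1 w hw, ?_⟩, ?_⟩, ?_⟩
  · intro i h a ha
    have hc := List.isChain_iff_getElem.1 hform.2 i (by omega)
    exact hc a ha
  · rw [FoataAux.prod_map_mkl, FoataAux.mkl_flatten_foata hsym, hmk]
  · rintro L' ⟨⟨hne', hblk', hadj'⟩, hprod'⟩
    have hch' : L'.Chain' (FoataAux.Nxt I) := by
      unfold List.Chain'
      rw [List.isChain_iff_getElem]
      intro i hi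
      intro a ha
      exact hadj' i (by omega) a ha
    have hflat' : FoataAux.mkl I L'.flatten = Con.mk' (TraceCon I) u := by
      rw [← FoataAux.prod_map_mkl, hprod']
    have hcon : TraceCon I (FreeMonoid.ofList L'.flatten) u := by
      rw [← hu]
      exact (Con.eq _).1 (hflat'.trans hmk.symm)
    have heq := FoataAux.foata_eq_of_traceCon hirr hsym hcon
    have h1 : FreeMonoid.toList (FreeMonoid.ofList L'.flatten) = L'.flatten := rfl
    rw [h1] at heq
    rw [← FoataAux.foata_flatten L' hne' (fun w hw => hblk' w hw) hch']
    exact heq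
end

section
/- Let M = M(Σ,I) be a free partially commutative monoid, Σ_0 ⊆ Σ, I_0 = (Σ_0×Σ_0) ∩ I, and M_0 = M(Σ_0,I_0), regarded as a submonoid of M via the natural embedding. Then the monoid ring ℤM is a free left ℤM_0-module (with respect to the module structure induced by the ring homomorphism ℤM_0 → ℤM). -/
open scoped Classical

/-- The monoid homomorphism `M(A, I_A) → M(Σ, I)` induced by an inclusion `A ⊆ Σ`,
sending the class of a word `x ∈ A*` to its class in `M(Σ, I)`. -/
def TraceMonoid.embed {σ : Type*} (I : σ → σ → Prop) (A : Set σ) :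
    TraceMonoid A (fun a b => I a.1 b.1) →* TraceMonoid σ I :=
  Con.lift _ ((TraceMonoid.mk I).comp (FreeMonoid.map Subtype.val)) <| by
    refine Con.conGen_le.2 ?_
    rintro u v ⟨a, b, hI, rfl, rfl⟩
    simp only [Con.ker_rel, MonoidHom.comp_apply, map_mul, FreeMonoid.map_of]
    rw [← map_mul, ← map_mul]
    exact Quotient.sound (ConGen.Rel.of _ _ ⟨a.1, b.1, hI, rfl, rfl⟩)

namespace TraceAux

variable {α : Type*} {J : α → α → Prop}

/-- Pairs (initial alphabet, full alphabet). -/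
@[ext] structure MM (J : α → α → Prop) where
  min : Set α
  al : Set α

instance : Monoid (MM J) where
  mul x y := ⟨x.min ∪ (y.min ∩ {a | ∀ b ∈ x.al, J a b}), x.al ∪ y.al⟩
  one := ⟨∅, ∅⟩
  mul_assoc x y z := by
    ext a <;>
      simp only [HMul.hMul, Mul.mul, Set.mem_union, Set.mem_inter_iff, Set.mem_setOf_eq] <;>
      aesop
  one_mul x := by
    ext a <;>
      simp only [HMul.hMul, Mul.mul, One.one, Set.mem_union, Set.mem_inter_iff,
        Set.mem_setOf_eq, Set.mem_empty_iff_false] <;> tauto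
  mul_one x := by
    ext a <;>
      simp only [HMul.hMul, Mul.mul, One.one, Set.mem_union, Set.mem_inter_iff,
        Set.mem_setOf_eq, Set.mem_empty_iff_false] <;> tauto

@[simp] lemma mul_min (x y : MM J) :
    (x * y).min = x.min ∪ (y.min ∩ {a | ∀ b ∈ x.al, J a b}) := rfl
@[simp] lemma mul_al (x y : MM J) : (x * y).al = x.al ∪ y.al := rfl
@[simp] lemma one_min : (1 : MM J).min = ∅ := rfl
@[simp] lemma one_al : (1 : MM J).al = ∅ := rfl

variable (J) in
/-- The word-level hom computing (initial alphabet, alphabet). -/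
def Fw : FreeMonoid α →* MM J := FreeMonoid.lift fun a => ⟨{a}, {a}⟩

@[simp] lemma Fw_of (a : α) : Fw J (FreeMonoid.of a) = ⟨{a}, {a}⟩ :=
  FreeMonoid.lift_eval_of _ a

variable (J) in
/-- The trace-level version; needs symmetry of `J`. -/
def Fm (hsym : Symmetric J) : TraceMonoid α J →* MM J :=
  Con.lift _ (Fw J) <| by
    refine Con.conGen_le.2 ?_
    rintro u v ⟨a, b, hI, rfl, rfl⟩
    simp only [Con.ker_rel, map_mul, Fw_of]
    ext c <;>
      simp only [mul_min, mul_al, Set.mem_union, Set.mem_inter_iff, Set.mem_setOf_eq,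
        Set.mem_singleton_iff]
    · constructor
      · rintro (rfl | ⟨rfl, -⟩)
        · exact Or.inr ⟨rfl, by rintro b rfl; exact hI⟩
        · exact Or.inl rfl
      · rintro (rfl | ⟨rfl, -⟩)
        · exact Or.inr ⟨rfl, by rintro b rfl; exact hsym hI⟩
        · exact Or.inl rfl
    · tauto

@[simp] lemma Fm_mk (hsym : Symmetric J) (w : FreeMonoid α) :
    Fm J hsym (TraceMonoid.mk J w) = Fw J w := rfl

variable (J) in
/-- The set of letters that can appear first in some representative. -/
def mins (hsym : Symmetric J) (m : TraceMonoid α J) : Set α := (Fm J hsym m).min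

lemma mins_mul (hsym : Symmetric J) (x y : TraceMonoid α J) :
    mins J hsym (x * y) =
      mins J hsym x ∪ (mins J hsym y ∩ {a | ∀ b ∈ (Fm J hsym x).al, J a b}) := by
  unfold mins; rw [map_mul]; rfl

lemma mem_mins_of_factor (hsym : Symmetric J) (a : α) (m : TraceMonoid α J) :
    a ∈ mins J hsym (TraceMonoid.mk J (FreeMonoid.of a) * m) := by
  rw [mins_mul]
  exact Or.inl (by simp [mins])

lemma mk_surjective : Function.Surjective (TraceMonoid.mk J) := Con.mk'_surjective

lemma swap_mk {a b : α} (h : J a b) :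
    TraceMonoid.mk J (FreeMonoid.of a * FreeMonoid.of b) =
      TraceMonoid.mk J (FreeMonoid.of b * FreeMonoid.of a) :=
  Quotient.sound (ConGen.Rel.of _ _ ⟨a, b, h, rfl, rfl⟩)

variable (J) in
/-- Length, as a monoid hom to `Multiplicative ℕ`. -/
def lenm : TraceMonoid α J →* Multiplicative ℕ :=
  Con.lift _ (FreeMonoid.lift fun _ => Multiplicative.ofAdd 1) <| by
    refine Con.conGen_le.2 ?_
    rintro u v ⟨a, b, hI, rfl, rfl⟩
    simp [Con.ker_rel]

variable (J) in
def len (m : TraceMonoid α J) : ℕ := Multiplicative.toAdd (lenm J m)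

@[simp] lemma len_mk (w : FreeMonoid α) : len J (TraceMonoid.mk J w) = w.length := by
  show Multiplicative.toAdd ((FreeMonoid.lift fun _ => Multiplicative.ofAdd 1) w) = _
  induction w using FreeMonoid.recOn with
  | one => rfl
  | of_mul a w ih =>
    simp only [map_mul, FreeMonoid.lift_eval_of, toAdd_mul, ih, FreeMonoid.length_mul,
      toAdd_ofAdd, FreeMonoid.length_of, Nat.add_comm]

@[simp] lemma len_one : len J (1 : TraceMonoid α J) = 0 := rfl

lemma len_mul (x y : TraceMonoid α J) : len J (x * y) = len J x + len J y := by
  show Multiplicative.toAdd (lenm J (x * y)) = _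
  rw [map_mul]; rfl

lemma len_of_mul (a : α) (m : TraceMonoid α J) :
    len J (TraceMonoid.mk J (FreeMonoid.of a) * m) = len J m + 1 := by
  rw [len_mul]; simp [Nat.add_comm]

lemma eq_one_of_len_eq_zero {m : TraceMonoid α J} (h : len J m = 0) : m = 1 := by
  obtain ⟨w, rfl⟩ := mk_surjective (J := J) m
  rw [len_mk] at h
  rw [FreeMonoid.length_eq_zero.mp h]; rfl

/-- If `a` is in the initial alphabet, it can be factored out. -/
lemma exists_factor_of_mem_mins_list (hsym : Symmetric J) :
    ∀ (l : List α) {a : α}, a ∈ (Fw J (FreeMonoid.ofList l)).min →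
      ∃ m', TraceMonoid.mk J (FreeMonoid.ofList l) =
        TraceMonoid.mk J (FreeMonoid.of a) * m' := by
  intro l
  induction l with
  | nil => intro a ha; simp only [FreeMonoid.ofList_nil, map_one, one_min] at ha; cases ha
  | cons b l ih =>
    intro a ha
    rw [FreeMonoid.ofList_cons, map_mul, Fw_of, mul_min] at ha
    rcases ha with ha | ⟨ha, hc⟩
    · rcases ha with rfl
      exact ⟨TraceMonoid.mk J (FreeMonoid.ofList l), by rw [FreeMonoid.ofList_cons, map_mul]⟩
    · have hJab : J a b := hc b rfl
      obtain ⟨m', hm'⟩ := ih ha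
      refine ⟨TraceMonoid.mk J (FreeMonoid.of b) * m', ?_⟩
      rw [FreeMonoid.ofList_cons, map_mul, hm', ← mul_assoc, ← mul_assoc, ← map_mul, ← map_mul,
        swap_mk (hsym hJab)]

lemma exists_factor_of_mem_mins (hsym : Symmetric J) {m : TraceMonoid α J} {a : α}
    (h : a ∈ mins J hsym m) :
    ∃ m', m = TraceMonoid.mk J (FreeMonoid.of a) * m' := by
  obtain ⟨w, rfl⟩ := mk_surjective (J := J) m
  have := exists_factor_of_mem_mins_list hsym w.toList (a := a)
  rw [FreeMonoid.ofList_toList] at this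
  exact this h

end TraceAux

namespace TraceAux
variable {α : Type*} {J : α → α → Prop}

@[simp] lemma length_ofList' (l : List α) : (FreeMonoid.ofList l).length = l.length := rfl

/-- Projection of a word onto the letters `{a, b}`. -/
noncomputable def Pw (J : α → α → Prop) (a b : α) : FreeMonoid α →* FreeMonoid α :=
  FreeMonoid.lift fun c => if c = a ∨ c = b then FreeMonoid.of c else 1

lemma Pw_of (a b c : α) :
    Pw J a b (FreeMonoid.of c) = if c = a ∨ c = b then FreeMonoid.of c else 1 :=
  FreeMonoid.lift_eval_of _ c

lemma Pw_eq_of_mk_eq (hsym : Symmetric J) (hirr : Irreflexive J) {a b : α} (hab : ¬ J a b)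
    {u v : FreeMonoid α} (h : TraceMonoid.mk J u = TraceMonoid.mk J v) :
    Pw J a b u = Pw J a b v := by
  have hle : TraceCon J ≤ Con.ker (Pw J a b) := by
    refine Con.conGen_le.2 ?_
    rintro x y ⟨c, d, hcd, rfl, rfl⟩
    simp only [Con.ker_rel, map_mul, Pw_of]
    by_cases hc : c = a ∨ c = b <;> by_cases hd : d = a ∨ d = b
    · exfalso
      rcases hc with rfl | rfl <;> rcases hd with rfl | rfl
      · exact hirr _ hcd
      · exact hab hcd
      · exact hab (hsym hcd)
      · exact hirr _ hcd
    · simp [hc, hd]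
    · simp [hc, hd]
    · simp [hc, hd]
  exact hle ((Con.eq _).mp h)

lemma head_eq_of_word_eq {a c : α} {x w : FreeMonoid α}
    (h : FreeMonoid.of c * x = FreeMonoid.of a * w) : c = a := by
  have := congrArg FreeMonoid.toList h
  simpa [FreeMonoid.toList_mul] using (List.cons.injEq _ _ _ _ ▸ this).1

lemma mem_min_of_proj (hsym : Symmetric J) (hirr : Irreflexive J) :
    ∀ (l : List α) (a : α),
      (∀ c, ¬ J a c → ∃ w, Pw J a c (FreeMonoid.ofList l) = FreeMonoid.of a * w) →
      a ∈ (Fw J (FreeMonoid.ofList l)).min := by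
  intro l
  induction l with
  | nil =>
    intro a h
    exfalso
    obtain ⟨w, hw⟩ := h a (hirr a)
    simp only [FreeMonoid.ofList_nil, map_one] at hw
    have := congrArg FreeMonoid.length hw
    simp [FreeMonoid.length_mul] at this
    omega
  | cons c l ih =>
    intro a h
    rw [FreeMonoid.ofList_cons, map_mul, Fw_of, mul_min]
    by_cases hca : c = a
    · subst hca; exact Or.inl rfl
    · have hJac : J a c := by
        by_contra hJ
        obtain ⟨w, hw⟩ := h c hJ
        rw [FreeMonoid.ofList_cons, map_mul, Pw_of, if_pos (Or.inr rfl)] at hw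
        exact hca (head_eq_of_word_eq hw)
      refine Or.inr ⟨ih a ?_, ?_⟩
      · intro c' hc'
        obtain ⟨w, hw⟩ := h c' hc'
        have hcc' : ¬ (c = a ∨ c = c') := by
          rintro (rfl | rfl)
          · exact hca rfl
          · exact hc' hJac
        rw [FreeMonoid.ofList_cons, map_mul, Pw_of, if_neg hcc', one_mul] at hw
        exact ⟨w, hw⟩
      · rintro b rfl
        exact hJac

/-- The projection lemma (converse direction). -/
lemma mk_eq_of_proj (hsym : Symmetric J) (hirr : Irreflexive J) :
    ∀ (n : ℕ) (l₁ l₂ : List α), l₁.length = n → l₂.length = n →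
      (∀ a b, ¬ J a b → Pw J a b (FreeMonoid.ofList l₁) = Pw J a b (FreeMonoid.ofList l₂)) →
      TraceMonoid.mk J (FreeMonoid.ofList l₁) = TraceMonoid.mk J (FreeMonoid.ofList l₂) := by
  intro n
  induction n with
  | zero =>
    intro l₁ l₂ h1 h2 _
    rw [List.length_eq_zero_iff.mp h1, List.length_eq_zero_iff.mp h2]
  | succ n ih =>
    rintro (_ | ⟨a, l₁'⟩) l₂ h1 h2 h
    · simp at h1
    have hmem : a ∈ (Fw J (FreeMonoid.ofList l₂)).min := by
      refine mem_min_of_proj hsym hirr l₂ a (fun c hc => ?_)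
      refine ⟨Pw J a c (FreeMonoid.ofList l₁'), ?_⟩
      rw [← h a c hc, FreeMonoid.ofList_cons, map_mul, Pw_of, if_pos (Or.inl rfl)]
    obtain ⟨m', hm'⟩ := exists_factor_of_mem_mins_list hsym l₂ hmem
    obtain ⟨w, rfl⟩ := mk_surjective (J := J) m'
    have hm2 : TraceMonoid.mk J (FreeMonoid.ofList l₂)
        = TraceMonoid.mk J (FreeMonoid.ofList (a :: w.toList)) := by
      rw [hm', FreeMonoid.ofList_cons, map_mul, FreeMonoid.ofList_toList]
    have hlen : w.toList.length = n := by
      have h3 := congrArg (len J) hm2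
      simp only [len_mk, length_ofList', List.length_cons, h2] at h3
      omega
    have hproj : ∀ a' b, ¬ J a' b →
        Pw J a' b (FreeMonoid.ofList l₁') = Pw J a' b (FreeMonoid.ofList w.toList) := by
      intro a' b hab
      have e1 : Pw J a' b (FreeMonoid.ofList (a :: l₁'))
          = Pw J a' b (FreeMonoid.ofList (a :: w.toList)) :=
        (h a' b hab).trans (Pw_eq_of_mk_eq hsym hirr hab hm2)
      rw [FreeMonoid.ofList_cons, FreeMonoid.ofList_cons, map_mul, map_mul] at e1
      exact mul_left_cancel e1
    have hmain : TraceMonoid.mk J (FreeMonoid.ofList l₁')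
        = TraceMonoid.mk J (FreeMonoid.ofList w.toList) := by
      refine ih l₁' w.toList ?_ hlen hproj
      simpa using h1
    rw [hm2, FreeMonoid.ofList_cons, FreeMonoid.ofList_cons, map_mul, map_mul, hmain]

/-- Left cancellation by a single letter. -/
lemma cancel_of (hsym : Symmetric J) (hirr : Irreflexive J) {a : α} {x y : TraceMonoid α J}
    (h : TraceMonoid.mk J (FreeMonoid.of a) * x = TraceMonoid.mk J (FreeMonoid.of a) * y) :
    x = y := by
  obtain ⟨u, rfl⟩ := mk_surjective (J := J) x
  obtain ⟨v, rfl⟩ := mk_surjective (J := J) y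
  have h' : TraceMonoid.mk J (FreeMonoid.ofList (a :: u.toList))
      = TraceMonoid.mk J (FreeMonoid.ofList (a :: v.toList)) := by
    simpa [FreeMonoid.ofList_cons, FreeMonoid.ofList_toList, map_mul] using h
  have hlen : v.toList.length = u.toList.length := by
    have h3 := congrArg (len J) h'
    simp only [len_mk, length_ofList', List.length_cons] at h3
    omega
  have hproj : ∀ a' b, ¬ J a' b →
      Pw J a' b (FreeMonoid.ofList u.toList) = Pw J a' b (FreeMonoid.ofList v.toList) := by
    intro a' b hab
    have e1 := Pw_eq_of_mk_eq hsym hirr hab h'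
    rw [FreeMonoid.ofList_cons, FreeMonoid.ofList_cons, map_mul, map_mul] at e1
    exact mul_left_cancel e1
  have h4 := mk_eq_of_proj hsym hirr u.toList.length u.toList v.toList rfl hlen hproj
  rw [FreeMonoid.ofList_toList, FreeMonoid.ofList_toList] at h4
  exact h4

lemma cancel_left_list (hsym : Symmetric J) (hirr : Irreflexive J) :
    ∀ (l : List α) (x y : TraceMonoid α J),
      TraceMonoid.mk J (FreeMonoid.ofList l) * x = TraceMonoid.mk J (FreeMonoid.ofList l) * y →
      x = y := by
  intro l
  induction l with
  | nil =>
    intro x y h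
    simpa [FreeMonoid.ofList_nil, map_one] using h
  | cons c l ih =>
    intro x y h
    rw [FreeMonoid.ofList_cons, map_mul, mul_assoc, mul_assoc] at h
    exact ih _ _ (cancel_of hsym hirr h)

/-- Left cancellation in a trace monoid. -/
lemma cancel_left (hsym : Symmetric J) (hirr : Irreflexive J) (z : TraceMonoid α J)
    {x y : TraceMonoid α J} (h : z * x = z * y) : x = y := by
  obtain ⟨w, rfl⟩ := mk_surjective (J := J) z
  rw [← FreeMonoid.ofList_toList w] at h
  exact cancel_left_list hsym hirr w.toList x y h

end TraceAux

namespace TraceAux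

section Fact

variable {σ : Type*} (I : σ → σ → Prop) (S₀ : Set σ)

lemma hsym0 (hsym : Symmetric I) :
    Symmetric (fun a b : S₀ => I a.1 b.1) := fun _ _ h => hsym h

lemma hirr0 (hirr : Irreflexive I) :
    Irreflexive (fun a b : S₀ => I a.1 b.1) := fun a h => hirr a.1 h

@[simp] lemma embed_mk_of (a : S₀) :
    TraceMonoid.embed I S₀ (TraceMonoid.mk _ (FreeMonoid.of a))
      = TraceMonoid.mk I (FreeMonoid.of a.1) := by
  show (TraceMonoid.mk I) (FreeMonoid.map Subtype.val (FreeMonoid.of a)) = _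
  simp [FreeMonoid.map_of]

lemma proj_mk_of (c : σ) :
    TraceMonoid.proj I S₀ (TraceMonoid.mk I (FreeMonoid.of c))
      = TraceMonoid.mk _ (if h : c ∈ S₀ then FreeMonoid.of (⟨c, h⟩ : S₀) else 1) := by
  show Con.lift _ _ _ (Con.mk' _ _) = _
  rfl

lemma proj_embed (u : TraceMonoid S₀ fun a b : S₀ => I a.1 b.1) :
    TraceMonoid.proj I S₀ (TraceMonoid.embed I S₀ u) = u := by
  obtain ⟨w, rfl⟩ := mk_surjective u
  induction w using FreeMonoid.recOn with
  | one => simp [map_one]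
  | of_mul a w ih =>
    simp only [map_mul, ih, embed_mk_of, proj_mk_of, dif_pos a.2]

end Fact

section Fact2

variable {α : Type*} {J : α → α → Prop}

lemma min_subset_al :
    ∀ (l : List α), ((Fw J (FreeMonoid.ofList l)).min : Set α) ⊆ (Fw J (FreeMonoid.ofList l)).al := by
  intro l
  induction l with
  | nil => simp
  | cons c l ih =>
    rw [FreeMonoid.ofList_cons, map_mul, Fw_of]
    rintro a (ha | ⟨ha, -⟩)
    · exact Or.inl ha
    · exact Or.inr (ih ha)

lemma mins_subset_al (hsym : Symmetric J) (m : TraceMonoid α J) :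
    mins J hsym m ⊆ (Fm J hsym m).al := by
  obtain ⟨w, rfl⟩ := mk_surjective m
  rw [← FreeMonoid.ofList_toList w]
  exact min_subset_al w.toList

lemma mins_nonempty (hsym : Symmetric J) {m : TraceMonoid α J} (hm : m ≠ 1) :
    ∃ a, a ∈ mins J hsym m := by
  obtain ⟨w, rfl⟩ := mk_surjective m
  rcases hl : w.toList with _ | ⟨c, l⟩
  · exfalso
    apply hm
    rw [← FreeMonoid.ofList_toList w, hl]
    rfl
  · refine ⟨c, ?_⟩
    have : w = FreeMonoid.ofList (c :: l) := by rw [← hl, FreeMonoid.ofList_toList]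
    subst this
    show c ∈ (Fw J (FreeMonoid.ofList (c :: l))).min
    rw [FreeMonoid.ofList_cons, map_mul, Fw_of, mul_min]
    exact Or.inl rfl

end Fact2

section Fact3

variable {σ : Type*} {I : σ → σ → Prop} {S₀ : Set σ}

lemma al_embed (hsym : Symmetric I) (u : TraceMonoid S₀ fun a b : S₀ => I a.1 b.1) :
    (Fm I hsym (TraceMonoid.embed I S₀ u)).al ⊆ S₀ := by
  obtain ⟨w, rfl⟩ := mk_surjective u
  induction w using FreeMonoid.recOn with
  | one => simp [map_one]
  | of_mul a w ih =>
    rw [map_mul, map_mul, map_mul, embed_mk_of]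
    rintro c (hc | hc)
    · have : (Fm I hsym (TraceMonoid.mk I (FreeMonoid.of a.1))).al = {a.1} := by
        show (Fw I (FreeMonoid.of a.1)).al = _
        rw [Fw_of]
      rw [this] at hc
      rcases hc with rfl
      exact a.2
    · exact ih hc

/-- A minimal letter of `embed u * anything` coming from `S₀` can be split off `u`. -/
lemma factor_embed_of_mem_mins (hsym : Symmetric I) (hirr : Irreflexive I)
    (u : TraceMonoid S₀ fun a b : S₀ => I a.1 b.1) {a : σ}
    (ha : a ∈ mins I hsym (TraceMonoid.embed I S₀ u)) :
    ∃ (b : S₀) (u' : TraceMonoid S₀ fun a b : S₀ => I a.1 b.1),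
      b.1 = a ∧ u = TraceMonoid.mk _ (FreeMonoid.of b) * u' := by
  have haS : a ∈ S₀ := al_embed hsym u (mins_subset_al hsym _ ha)
  obtain ⟨z, hz⟩ := exists_factor_of_mem_mins hsym ha
  refine ⟨⟨a, haS⟩, TraceMonoid.proj I S₀ z, rfl, ?_⟩
  have := congrArg (TraceMonoid.proj I S₀) hz
  rw [proj_embed, map_mul, proj_mk_of, dif_pos haS] at this
  exact this

variable (I) (S₀) in
/-- `m` has no minimal letter in `S₀`. -/
def IsT (hsym : Symmetric I) (m : TraceMonoid σ I) : Prop :=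
  ∀ a ∈ mins I hsym m, a ∉ S₀

/-- Existence of the factorization. -/
lemma exists_fact (hsym : Symmetric I) (hirr : Irreflexive I) (m : TraceMonoid σ I) :
    ∃ (u : TraceMonoid S₀ fun a b : S₀ => I a.1 b.1) (t : TraceMonoid σ I),
      IsT I S₀ hsym t ∧ m = TraceMonoid.embed I S₀ u * t := by
  suffices h : ∀ (n : ℕ) (m : TraceMonoid σ I), len I m = n →
      ∃ u t, IsT I S₀ hsym t ∧ m = TraceMonoid.embed I S₀ u * t from h (len I m) m rfl
  intro n
  induction n using Nat.strong_induction_on with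
  | _ n ih =>
  intro m hn
  by_cases hT : IsT I S₀ hsym m
  · exact ⟨1, m, hT, by rw [map_one, one_mul]⟩
  · simp only [IsT, not_forall, not_not] at hT
    obtain ⟨a, ha, haS⟩ := hT
    obtain ⟨m', rfl⟩ := exists_factor_of_mem_mins hsym ha
    have hlt : len I m' < n := by
      rw [← hn, len_of_mul]; omega
    obtain ⟨u, t, hTt, rfl⟩ := ih (len I m') hlt m' rfl
    exact ⟨TraceMonoid.mk _ (FreeMonoid.of ⟨a, haS⟩) * u, t, hTt, by
      rw [map_mul, embed_mk_of, mul_assoc]⟩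

/-- Uniqueness of the factorization. -/
lemma fact_unique (hsym : Symmetric I) (hirr : Irreflexive I) :
    ∀ (n : ℕ) (u u' : TraceMonoid S₀ fun a b : S₀ => I a.1 b.1) (t t' : TraceMonoid σ I),
      len _ u = n → IsT I S₀ hsym t → IsT I S₀ hsym t' →
      TraceMonoid.embed I S₀ u * t = TraceMonoid.embed I S₀ u' * t' →
      u = u' ∧ t = t' := by
  intro n
  induction n using Nat.strong_induction_on with
  | _ n ih =>
  intro u u' t t' hn hT hT' heq
  rcases Nat.eq_zero_or_pos n with rfl | hpos
  · -- u = 1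
    have hu : u = 1 := eq_one_of_len_eq_zero hn
    subst hu
    rw [map_one, one_mul] at heq
    -- claim u' = 1
    by_cases hu' : u' = 1
    · subst hu'
      rw [map_one, one_mul] at heq
      exact ⟨rfl, heq⟩
    · exfalso
      obtain ⟨b, hb⟩ := mins_nonempty (hsym0 I S₀ hsym) hu'
      obtain ⟨w, hw⟩ := exists_factor_of_mem_mins (hsym0 I S₀ hsym) hb
      have : t = TraceMonoid.mk I (FreeMonoid.of b.1) * (TraceMonoid.embed I S₀ w * t') := by
        rw [heq, hw, map_mul, embed_mk_of, mul_assoc]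
      have hmem : b.1 ∈ mins I hsym t := this ▸ mem_mins_of_factor hsym b.1 _
      exact hT b.1 hmem b.2
  · -- u ≠ 1
    have hu : u ≠ 1 := by
      intro h
      rw [h] at hn
      simp at hn
      omega
    obtain ⟨b, hb⟩ := mins_nonempty (hsym0 I S₀ hsym) hu
    obtain ⟨w, hw⟩ := exists_factor_of_mem_mins (hsym0 I S₀ hsym) hb
    have heq2 : TraceMonoid.mk I (FreeMonoid.of b.1) * (TraceMonoid.embed I S₀ w * t)
        = TraceMonoid.embed I S₀ u' * t' := by
      rw [← heq, hw, map_mul, embed_mk_of, mul_assoc]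
    have hmem : b.1 ∈ mins I hsym (TraceMonoid.embed I S₀ u' * t') :=
      heq2 ▸ mem_mins_of_factor hsym b.1 _
    rw [mins_mul] at hmem
    rcases hmem with hmem | ⟨hmem, -⟩
    swap
    · exact absurd b.2 (hT' b.1 hmem)
    obtain ⟨b', w', hb'1, hw'⟩ := factor_embed_of_mem_mins hsym hirr u' hmem
    obtain rfl : b' = b := Subtype.ext hb'1
    have heq3 : TraceMonoid.mk I (FreeMonoid.of b'.1) * (TraceMonoid.embed I S₀ w * t)
        = TraceMonoid.mk I (FreeMonoid.of b'.1) * (TraceMonoid.embed I S₀ w' * t') := by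
      rw [heq2, hw', map_mul, embed_mk_of, mul_assoc]
    have heq4 := cancel_of hsym hirr heq3
    have hlenw : len _ w < n := by
      have : len _ u = len _ w + 1 := by rw [hw, len_of_mul]
      omega
    obtain ⟨hww', htt'⟩ := ih (len _ w) (by omega) w w' t t' rfl hT hT' heq4
    refine ⟨?_, htt'⟩
    rw [hw, hw', hww']

end Fact3

end TraceAux

namespace TraceAux

section Equivs

variable {σ : Type*} (I : σ → σ → Prop) (S₀ : Set σ) (hsym : Symmetric I) (hirr : Irreflexive I)

/-- The factorization bijection `T × M₀ ≃ M`. -/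
noncomputable def factorEquiv :
    ({t : TraceMonoid σ I // IsT I S₀ hsym t} × TraceMonoid S₀ fun a b => I a.1 b.1)
      ≃ TraceMonoid σ I :=
  Equiv.ofBijective (fun p => TraceMonoid.embed I S₀ p.2 * p.1.1) (by
    constructor
    · rintro ⟨⟨t, ht⟩, u⟩ ⟨⟨t', ht'⟩, u'⟩ h
      obtain ⟨h1, h2⟩ := fact_unique hsym hirr (len _ u) u u' t t' rfl ht ht' h
      simp only [Prod.mk.injEq, Subtype.mk.injEq]
      exact ⟨h2, h1⟩
    · intro m
      obtain ⟨u, t, hT, hm⟩ := exists_fact hsym hirr m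
      exact ⟨(⟨t, hT⟩, u), hm.symm⟩)

@[simp] lemma factorEquiv_apply (p) :
    factorEquiv I S₀ hsym hirr p = TraceMonoid.embed I S₀ p.2 * p.1.1 := rfl

/-- The additive equivalence `ℤM ≃+ T →₀ ℤM₀`. -/
noncomputable def freeEquiv :
    MonoidAlgebra ℤ (TraceMonoid σ I)
      ≃+ ({t : TraceMonoid σ I // IsT I S₀ hsym t}
            →₀ MonoidAlgebra ℤ (TraceMonoid S₀ fun a b => I a.1 b.1)) :=
  MonoidAlgebra.coeffAddEquiv.trans (((Finsupp.domCongr (factorEquiv I S₀ hsym hirr).symm).trans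
    (Finsupp.finsuppProdLEquiv ℤ).toAddEquiv).trans
      (Finsupp.mapRange.addEquiv MonoidAlgebra.coeffAddEquiv.symm))

lemma freeEquiv_single (p) (c : ℤ) :
    freeEquiv I S₀ hsym hirr (MonoidAlgebra.single (factorEquiv I S₀ hsym hirr p) c)
      = Finsupp.single p.1 (MonoidAlgebra.single p.2 c) := by
  have h1 : (Finsupp.domCongr (factorEquiv I S₀ hsym hirr).symm)
      (Finsupp.single (factorEquiv I S₀ hsym hirr p) c)
      = Finsupp.single p c := by
    rw [Finsupp.domCongr_apply, Finsupp.equivMapDomain_single, Equiv.symm_apply_apply]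
  show Finsupp.mapRange.addEquiv MonoidAlgebra.coeffAddEquiv.symm ((Finsupp.finsuppProdLEquiv ℤ)
      ((Finsupp.domCongr (factorEquiv I S₀ hsym hirr).symm)
        (Finsupp.single (factorEquiv I S₀ hsym hirr p) c))) = _
  rw [h1]
  show Finsupp.mapRange MonoidAlgebra.coeffAddEquiv.symm (map_zero _) ((Finsupp.single p c).curry) = _
  rw [Finsupp.curry_single, Finsupp.mapRange_single]
  rfl

end Equivs

end TraceAux

/-- **Lemma 1.4.** For a free partially commutative monoid `M = M(Σ, I)` and
`M₀ = M(Σ₀, I₀)` with `Σ₀ ⊆ Σ`, `I₀ = (Σ₀×Σ₀) ∩ I`, the monoid ring `ℤM` is a free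
(left) `ℤM₀`-module, with respect to the module structure induced by the ring
homomorphism `ℤM₀ → ℤM` coming from the natural embedding `M₀ → M`. -/
theorem monoidAlgebra_free_over_submonoid {σ : Type*} [Fintype σ] (I : σ → σ → Prop)
    (hsym : Symmetric I) (hirr : Irreflexive I) (S₀ : Set σ) :
    @Module.Free (MonoidAlgebra ℤ (TraceMonoid S₀ fun a b => I a.1 b.1))
      (MonoidAlgebra ℤ (TraceMonoid σ I)) _ _
      (Module.compHom _ (MonoidAlgebra.mapDomainRingHom ℤ (TraceMonoid.embed I S₀))) := by
  classical
  letI : Module (MonoidAlgebra ℤ (TraceMonoid S₀ fun a b => I a.1 b.1))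
      (MonoidAlgebra ℤ (TraceMonoid σ I)) :=
    Module.compHom _ (MonoidAlgebra.mapDomainRingHom ℤ (TraceMonoid.embed I S₀))
  have hsmul : ∀ (r : MonoidAlgebra ℤ (TraceMonoid S₀ fun a b => I a.1 b.1))
      (x : MonoidAlgebra ℤ (TraceMonoid σ I)),
      TraceAux.freeEquiv I S₀ hsym hirr (r • x)
        = r • TraceAux.freeEquiv I S₀ hsym hirr x := by
    intro r x
    induction x using MonoidAlgebra.induction_linear with
    | zero => rw [smul_zero, map_zero, smul_zero]
    | add f g hf hg => rw [smul_add, map_add, hf, hg, map_add, smul_add]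
    | single m k =>
      induction r using MonoidAlgebra.induction_linear with
      | zero => rw [zero_smul, map_zero, zero_smul]
      | add f g hf hg => rw [add_smul, map_add, hf, hg, add_smul]
      | single n c =>
        obtain ⟨p, rfl⟩ := (TraceAux.factorEquiv I S₀ hsym hirr).surjective m
        trans TraceAux.freeEquiv I S₀ hsym hirr
            (MonoidAlgebra.single (TraceAux.factorEquiv I S₀ hsym hirr (p.1, n * p.2)) (c * k))
        · congr 1
          show (MonoidAlgebra.mapDomainRingHom ℤ (TraceMonoid.embed I S₀))
              (MonoidAlgebra.single n c)
              * MonoidAlgebra.single (TraceAux.factorEquiv I S₀ hsym hirr p) k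
              = MonoidAlgebra.single (TraceAux.factorEquiv I S₀ hsym hirr (p.1, n * p.2)) (c * k)
          rw [show (MonoidAlgebra.mapDomainRingHom ℤ (TraceMonoid.embed I S₀))
              (MonoidAlgebra.single n c)
              = MonoidAlgebra.single (TraceMonoid.embed I S₀ n) c from MonoidAlgebra.mapDomain_single,
            MonoidAlgebra.single_mul_single]
          congr 1
          simp only [TraceAux.factorEquiv_apply, ← mul_assoc, ← map_mul]
        · rw [TraceAux.freeEquiv_single I S₀ hsym hirr (p.1, n * p.2) (c * k),
            TraceAux.freeEquiv_single I S₀ hsym hirr p k]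
          ext a
          rcases eq_or_ne p.1 a with rfl | ha
          · simp only [Finsupp.smul_apply, Finsupp.single_eq_same, smul_eq_mul,
              MonoidAlgebra.single_mul_single]
          · simp only [Finsupp.smul_apply, Finsupp.single_eq_of_ne' ha, smul_zero]
  exact Module.Free.of_equiv
    (LinearEquiv.symm ({ TraceAux.freeEquiv I S₀ hsym hirr with map_smul' := hsmul } :
      _ ≃ₗ[MonoidAlgebra ℤ (TraceMonoid S₀ fun a b => I a.1 b.1)] _))
end

section
/- Let M = M(Σ,I) be a free partially commutative monoid, Σ_0 ⊆ Σ, I_0 = (Σ_0×Σ_0) ∩ I, and M_0 = M(Σ_0,I_0) regarded as a submonoid of M. Let B ⊆ M be the set of elements u ∈ M that admit no factorization u = s·u_0 with s ∈ M_0, s ≠ 1, u_0 ∈ M. Then every element w ∈ M can be written as w = a·u with a ∈ M_0 and u ∈ B, and this factorization is unique: if a·u = b·v with a, b ∈ M_0 and u, v ∈ B, then a = b and u = v. -/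
open scoped Classical

namespace TraceUF

open FreeMonoid List

variable {σ : Type*} (I : σ → σ → Prop)

/-- class of a word -/
noncomputable def mkl (l : List σ) : TraceMonoid σ I := TraceMonoid.mk I (FreeMonoid.ofList l)

variable {I}

lemma mkl_append (u v : List σ) : mkl I (u ++ v) = mkl I u * mkl I v := by
  simp [mkl, ofList_append, map_mul]

lemma mkl_nil : mkl I ([] : List σ) = 1 := rfl

lemma exists_mkl_rep (w : TraceMonoid σ I) : ∃ l : List σ, w = mkl I l := by
  obtain ⟨x, rfl⟩ := Quotient.exists_rep w
  exact ⟨FreeMonoid.toList x, rfl⟩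

lemma mkl_eq_iff {u v : List σ} :
    mkl I u = mkl I v ↔ TraceCon I (FreeMonoid.ofList u) (FreeMonoid.ofList v) :=
  Con.eq _

lemma swap_mkl {a b : σ} (h : I a b) (p q : List σ) :
    mkl I (p ++ a :: b :: q) = mkl I (p ++ b :: a :: q) := by
  rw [mkl_eq_iff]
  have base : TraceCon I (FreeMonoid.ofList [a, b]) (FreeMonoid.ofList [b, a]) :=
    ConGen.Rel.of _ _ ⟨a, b, h, rfl, rfl⟩
  have : TraceCon I (FreeMonoid.ofList p * (FreeMonoid.ofList [a,b] * FreeMonoid.ofList q))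
      (FreeMonoid.ofList p * (FreeMonoid.ofList [b,a] * FreeMonoid.ofList q)) :=
    (TraceCon I).mul ((TraceCon I).refl _) ((TraceCon I).mul base ((TraceCon I).refl _))
  simpa [ofList_append, ofList_cons, mul_assoc] using this

/-- move a letter commuting with a prefix to the front -/
lemma commute_front {x : σ} : ∀ (p : List σ), (∀ b ∈ p, I x b) → ∀ q : List σ,
    mkl I (p ++ x :: q) = mkl I (x :: (p ++ q)) := by
  intro p
  induction p with
  | nil => intro _ q; rfl
  | cons b p ih =>
    intro hp q
    have h1 : mkl I (b :: (p ++ x :: q)) = mkl I (b :: x :: (p ++ q)) := by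
      have := ih (fun c hc => hp c (mem_cons_of_mem _ hc)) q
      have h2 := congrArg (fun z => TraceMonoid.mk I (FreeMonoid.of b) * z) this
      exact (mkl_append [b] _).trans (h2.trans (mkl_append [b] _).symm)
    have h3 : mkl I (([] : List σ) ++ b :: x :: (p ++ q)) =
        mkl I (([] : List σ) ++ x :: b :: (p ++ q)) :=
      (swap_mkl (hp b (mem_cons_self (a := b) (l := p))) [] (p ++ q)).symm
    simpa using h1.trans h3

variable (I)

/-- filtered word keeping only letters `c`, `d` -/
noncomputable def fil (c d : σ) (l : List σ) : List σ :=
  l.filter (fun e => decide (e = c ∨ e = d))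

variable {I}

lemma fil_cons (c d x : σ) (l : List σ) :
    fil c d (x :: l) = if x = c ∨ x = d then x :: fil c d l else fil c d l := by
  by_cases h : x = c ∨ x = d <;> simp [fil, List.filter_cons, h]

lemma fil_append (c d : σ) (u v : List σ) :
    fil c d (u ++ v) = fil c d u ++ fil c d v := List.filter_append _ _

lemma mem_fil {c d e : σ} {l : List σ} (h : e ∈ fil c d l) : e ∈ l ∧ (e = c ∨ e = d) := by
  have := List.of_mem_filter h
  exact ⟨List.mem_of_mem_filter h, by simpa using this⟩

lemma mem_fil_self {c d e : σ} {l : List σ} (he : e ∈ l) (h : e = c ∨ e = d) :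
    e ∈ fil c d l := List.mem_filter.2 ⟨he, by simpa using h⟩

/-- filters are invariants of the trace congruence -/
lemma fil_invariant (hsym : Symmetric I) {c d : σ} (hcd : ¬ I c d) {u v : List σ}
    (huv : mkl I u = mkl I v) : fil c d u = fil c d v := by
  set F : FreeMonoid σ →* FreeMonoid σ :=
    FreeMonoid.lift (fun e => if e = c ∨ e = d then FreeMonoid.of e else 1) with hF
  have claim1 : ∀ l : List σ, F (FreeMonoid.ofList l) = FreeMonoid.ofList (fil c d l) := by
    intro l
    induction l with
    | nil => simp [fil]
    | cons x l ih =>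
      rw [ofList_cons, map_mul, ih, FreeMonoid.lift_eval_of, fil_cons]
      by_cases h : x = c ∨ x = d
      · simp [h, ofList_cons]
      · simp [h]
  have claim2 : TraceCon I ≤ Con.ker F := by
    refine Con.conGen_le.2 ?_
    rintro _ _ ⟨a, b, hI, rfl, rfl⟩
    show F _ = F _
    simp only [map_mul, hF, FreeMonoid.lift_eval_of]
    by_cases ha : a = c ∨ a = d <;> by_cases hb : b = c ∨ b = d
    · rw [if_pos ha, if_pos hb]
      rcases ha with rfl | rfl <;> rcases hb with rfl | rfl
      · rfl
      · exact absurd hI hcd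
      · exact absurd (hsym hI) hcd
      · rfl
    · rw [if_pos ha, if_neg hb, mul_one, one_mul]
    · rw [if_neg ha, if_pos hb, mul_one, one_mul]
    · rw [if_neg ha, if_neg hb]
  have h3 : TraceCon I (FreeMonoid.ofList u) (FreeMonoid.ofList v) := mkl_eq_iff.1 huv
  have h4 : F (FreeMonoid.ofList u) = F (FreeMonoid.ofList v) := claim2 h3
  rw [claim1, claim1] at h4
  exact congrArg FreeMonoid.toList h4

lemma first_occ {x : σ} : ∀ {v : List σ}, x ∈ v → ∃ p q, v = p ++ x :: q ∧ x ∉ p := by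
  intro v
  induction v with
  | nil => intro h; exact absurd h (List.not_mem_nil)
  | cons y v ih =>
    intro h
    by_cases hxy : x = y
    · exact ⟨[], v, by simp [hxy], List.not_mem_nil⟩
    · obtain ⟨p, q, rfl, hp⟩ := ih (by
        rcases List.mem_cons.1 h with h | h
        · exact absurd h hxy
        · exact h)
      exact ⟨y :: p, q, rfl, by simp [hp, Ne.symm, hxy]⟩


lemma comm_of_filters (hirr : Irreflexive I) {x : σ} {u p q : List σ} {v : List σ}
    (hv : v = p ++ x :: q) (hxp : x ∉ p)
    (hfil : ∀ c d, ¬ I c d → fil c d (x :: u) = fil c d v) : ∀ b ∈ p, I x b := by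
  intro b hb
  by_contra hxb
  have hbx : b ≠ x := fun h => hxp (h ▸ hb)
  have e1 := hfil x b hxb
  rw [hv, fil_append, fil_cons, fil_cons] at e1
  rw [if_pos (Or.inl rfl), if_pos (Or.inl rfl)] at e1
  have hbfp : b ∈ fil x b p := mem_fil_self hb (Or.inr rfl)
  cases hfp : fil x b p with
  | nil => rw [hfp] at hbfp; exact absurd hbfp (List.not_mem_nil)
  | cons h0 t =>
    rw [hfp] at e1
    have hx0 : x = h0 := by
      have := congrArg List.head? e1
      simpa using this
    have h0p : h0 ∈ p := (mem_fil (hfp ▸ List.mem_cons_self (a := h0) (l := t))).1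
    exact hxp (hx0 ▸ h0p)

lemma filters_nil (hirr : Irreflexive I) {v : List σ}
    (h : ∀ c d, ¬ I c d → fil c d ([] : List σ) = fil c d v) : v = [] := by
  cases v with
  | nil => rfl
  | cons e v =>
    have := h e e (hirr e)
    rw [fil_cons, if_pos (Or.inl rfl)] at this
    exact absurd this (by simp [fil])

lemma mkl_cons (x : σ) (l : List σ) : mkl I (x :: l) = mkl I [x] * mkl I l :=
  mkl_append [x] l

/-- The projection lemma: the filters onto non-commuting pairs determine the trace. -/
lemma filters_det (hsym : Symmetric I) (hirr : Irreflexive I) :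
    ∀ n (u v : List σ), u.length ≤ n →
    (∀ c d, ¬ I c d → fil c d u = fil c d v) → mkl I u = mkl I v := by
  intro n
  induction n with
  | zero =>
    intro u v hu h
    have : u = [] := List.length_eq_zero_iff.mp (Nat.le_zero.mp hu)
    subst this
    rw [filters_nil hirr h]
  | succ n ih =>
    intro u v hu h
    cases u with
    | nil => rw [filters_nil hirr h]
    | cons x u' =>
      have hx : x ∈ v := by
        have e := h x x (hirr x)
        rw [fil_cons, if_pos (Or.inl rfl)] at e
        have : x ∈ fil x x v := e ▸ List.mem_cons_self (a := x)
        exact (mem_fil this).1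
      obtain ⟨p, q, rfl, hxp⟩ := first_occ hx
      have hcomm : ∀ b ∈ p, I x b := comm_of_filters hirr rfl hxp h
      have hv2 : mkl I (p ++ x :: q) = mkl I (x :: (p ++ q)) := commute_front p hcomm q
      have hfil2 : ∀ c d, ¬ I c d → fil c d u' = fil c d (p ++ q) := by
        intro c d hcd
        have e1 := h c d hcd
        rw [fil_invariant hsym hcd hv2] at e1
        rw [fil_cons, fil_cons] at e1
        by_cases hx' : x = c ∨ x = d
        · rw [if_pos hx', if_pos hx'] at e1
          exact List.tail_eq_of_cons_eq e1
        · rw [if_neg hx', if_neg hx'] at e1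
          exact e1
      have hind := ih u' (p ++ q) (Nat.le_of_succ_le_succ hu) hfil2
      rw [mkl_cons, hind, ← mkl_cons, hv2]

/-- left cancellation at the level of words -/
lemma cancel_words (hsym : Symmetric I) (hirr : Irreflexive I) {m u v : List σ}
    (h : mkl I (m ++ u) = mkl I (m ++ v)) : mkl I u = mkl I v := by
  refine filters_det hsym hirr u.length u v le_rfl ?_
  intro c d hcd
  have := fil_invariant hsym hcd h
  rw [fil_append, fil_append] at this
  exact List.append_cancel_left this

/-- left cancellation in the trace monoid -/
lemma cancel_left (hsym : Symmetric I) (hirr : Irreflexive I) {a u v : TraceMonoid σ I}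
    (h : a * u = a * v) : u = v := by
  obtain ⟨m, rfl⟩ := exists_mkl_rep a
  obtain ⟨x, rfl⟩ := exists_mkl_rep u
  obtain ⟨y, rfl⟩ := exists_mkl_rep v
  rw [← mkl_append, ← mkl_append] at h
  exact cancel_words hsym hirr h

/-- extraction: if `x·w ≡ v` then `v` has an occurrence of `x` preceded only by
letters commuting with `x`. -/
lemma extract (hsym : Symmetric I) (hirr : Irreflexive I) {x : σ} {w v : List σ}
    (h : mkl I (x :: w) = mkl I v) :
    ∃ p q, v = p ++ x :: q ∧ (∀ b ∈ p, I x b) ∧ mkl I w = mkl I (p ++ q) := by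
  have hfil : ∀ c d, ¬ I c d → fil c d (x :: w) = fil c d v :=
    fun c d hcd => fil_invariant hsym hcd h
  have hx : x ∈ v := by
    have e := hfil x x (hirr x)
    rw [fil_cons, if_pos (Or.inl rfl)] at e
    exact (mem_fil (e ▸ List.mem_cons_self (a := x))).1
  obtain ⟨p, q, rfl, hxp⟩ := first_occ hx
  have hcomm : ∀ b ∈ p, I x b := comm_of_filters hirr rfl hxp hfil
  refine ⟨p, q, rfl, hcomm, ?_⟩
  have hv2 : mkl I (p ++ x :: q) = mkl I (x :: (p ++ q)) := commute_front p hcomm q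
  have : mkl I ([x] ++ w) = mkl I ([x] ++ (p ++ q)) := by
    simpa using h.trans hv2
  exact cancel_words hsym hirr this


lemma eq_nil_of_mkl_eq_one (hsym : Symmetric I) (hirr : Irreflexive I) {l : List σ}
    (h : mkl I l = 1) : l = [] :=
  filters_nil hirr (fun c d hcd => (fil_invariant hsym hcd (h.trans mkl_nil.symm)).symm)

variable (I)

noncomputable def tlen : TraceMonoid σ I →* Multiplicative ℕ :=
  Con.lift _ (FreeMonoid.lift fun _ => Multiplicative.ofAdd 1) <| by
    refine Con.conGen_le.2 ?_
    rintro _ _ ⟨a, b, hI, rfl, rfl⟩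
    show (FreeMonoid.lift fun _ => Multiplicative.ofAdd 1) _ =
      (FreeMonoid.lift fun _ => Multiplicative.ofAdd 1) _
    simp [mul_comm]

variable {I}

lemma tlen_mkl (l : List σ) : tlen I (mkl I l) = Multiplicative.ofAdd (l.length) := by
  induction l with
  | nil => rw [mkl_nil, map_one]; rfl
  | cons x l ih =>
    rw [mkl_cons, map_mul, ih]
    have h1 : tlen I (mkl I [x]) = Multiplicative.ofAdd 1 := by
      show Con.lift _ _ _ (Con.mk' _ (FreeMonoid.of x)) = _
      show (FreeMonoid.lift fun _ => (Multiplicative.ofAdd 1 : Multiplicative ℕ)) (FreeMonoid.of x) = _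
      simp
    rw [h1, ← ofAdd_add]
    congr 1
    simp [Nat.add_comm]

noncomputable def len (w : TraceMonoid σ I) : ℕ := Multiplicative.toAdd (tlen I w)

lemma len_mkl (l : List σ) : len (mkl I l) = l.length := by
  rw [len, tlen_mkl]; rfl

lemma len_mul (a b : TraceMonoid σ I) : len (a * b) = len a + len b := by
  rw [len, len, len, map_mul]; rfl

lemma len_pos_of_ne_one (hsym : Symmetric I) (hirr : Irreflexive I) {s : TraceMonoid σ I}
    (hs : s ≠ 1) : 1 ≤ len s := by
  obtain ⟨l, rfl⟩ := exists_mkl_rep s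
  rw [len_mkl]
  cases l with
  | nil => exact absurd mkl_nil hs
  | cons x l => simp

lemma mem_range_embed (S₀ : Set σ) {l : List σ} (hl : ∀ e ∈ l, e ∈ S₀) :
    mkl I l ∈ MonoidHom.mrange (TraceMonoid.embed I S₀) := by
  refine ⟨TraceMonoid.mk _ (FreeMonoid.ofList (l.pmap (fun e he => (⟨e, he⟩ : S₀)) hl)), ?_⟩
  show Con.lift _ _ _ (Con.mk' _ _) = _
  show ((TraceMonoid.mk I).comp (FreeMonoid.map Subtype.val)) _ = _
  simp only [MonoidHom.comp_apply]
  show TraceMonoid.mk I _ = TraceMonoid.mk I _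
  congr 1
  rw [← FreeMonoid.ofList_map]
  congr 1
  simp [List.map_pmap]

lemma rep_of_mem_range (S₀ : Set σ) {a : TraceMonoid σ I}
    (ha : a ∈ MonoidHom.mrange (TraceMonoid.embed I S₀)) :
    ∃ l : List σ, (∀ e ∈ l, e ∈ S₀) ∧ a = mkl I l := by
  obtain ⟨a₀, rfl⟩ := ha
  obtain ⟨w₀, rfl⟩ := Quotient.exists_rep a₀
  refine ⟨(FreeMonoid.toList w₀).map Subtype.val, ?_, ?_⟩
  · intro e he
    obtain ⟨s, _, rfl⟩ := List.mem_map.1 he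
    exact s.2
  · show Con.lift _ _ _ (Con.mk' _ w₀) = _
    show ((TraceMonoid.mk I).comp (FreeMonoid.map Subtype.val)) w₀ = _
    rfl

lemma key (hsym : Symmetric I) (hirr : Irreflexive I) (S₀ : Set σ) :
    ∀ (α : List σ), (∀ e ∈ α, e ∈ S₀) → ∀ (β : List σ), (∀ e ∈ β, e ∈ S₀) →
    ∀ u v : TraceMonoid σ I,
    (¬ ∃ s ∈ MonoidHom.mrange (TraceMonoid.embed I S₀), s ≠ 1 ∧ ∃ u₀, u = s * u₀) →
    (¬ ∃ s ∈ MonoidHom.mrange (TraceMonoid.embed I S₀), s ≠ 1 ∧ ∃ u₀, v = s * u₀) →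
    mkl I α * u = mkl I β * v → mkl I α = mkl I β ∧ u = v := by
  intro α
  induction α with
  | nil =>
    intro _ β hβ u v hu hv h
    rw [mkl_nil, one_mul] at h
    by_cases hb : mkl I β = 1
    · rw [hb, one_mul] at h
      exact ⟨mkl_nil.trans hb.symm, h⟩
    · exact absurd ⟨mkl I β, mem_range_embed S₀ hβ, hb, v, h⟩ hu
  | cons x α' ih =>
    intro hα β hβ u v hu hv h
    obtain ⟨μ, rfl⟩ := exists_mkl_rep u
    obtain ⟨ω, rfl⟩ := exists_mkl_rep v
    rw [← mkl_append, ← mkl_append] at h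
    have h' : mkl I (x :: (α' ++ μ)) = mkl I (β ++ ω) := h
    obtain ⟨p, q, hsplit, hcomm, -⟩ := extract hsym hirr h'
    have hxS : ∀ e ∈ [x], e ∈ S₀ := by
      intro e he
      simp only [List.mem_singleton] at he
      exact he ▸ hα x (List.mem_cons_self (a := x) (l := α'))
    have hxne : mkl I [x] ≠ 1 := fun hc => by
      simpa using eq_nil_of_mkl_eq_one hsym hirr hc
    rcases List.append_eq_append_iff.mp hsplit with ⟨t, hp, hω⟩ | ⟨t, hβ2, hq⟩
    · exfalso
      have htc : ∀ b ∈ t, I x b := fun b hb => hcomm b (hp ▸ List.mem_append_right β hb)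
      have hfac : mkl I ω = mkl I [x] * mkl I (t ++ q) := by
        rw [hω, commute_front t htc q, mkl_cons]
      exact hv ⟨mkl I [x], mem_range_embed S₀ hxS, hxne, mkl I (t ++ q), hfac⟩
    · cases t with
      | nil =>
        exfalso
        rw [List.nil_append] at hq
        have hfac : mkl I ω = mkl I [x] * mkl I q := by rw [← hq, mkl_cons]
        exact hv ⟨mkl I [x], mem_range_embed S₀ hxS, hxne, mkl I q, hfac⟩
      | cons y t' =>
        rw [List.cons_append] at hq
        have hyx : x = y := List.head_eq_of_cons_eq hq
        have hq' : q = t' ++ ω := List.tail_eq_of_cons_eq hq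
        subst hyx
        have hβ3 : mkl I β = mkl I (x :: (p ++ t')) := by
          rw [hβ2]
          exact commute_front p hcomm t'
        have h2 : mkl I ([x] ++ (α' ++ μ)) = mkl I ([x] ++ ((p ++ t') ++ ω)) := by
          have e1 : mkl I (β ++ ω) = mkl I (x :: ((p ++ t') ++ ω)) := by
            rw [mkl_append, hβ3, mkl_cons, mul_assoc, ← mkl_append, ← mkl_cons]
          exact h'.trans e1
        have h3 := cancel_words hsym hirr h2
        rw [mkl_append, mkl_append] at h3
        have hsub : ∀ e ∈ p ++ t', e ∈ S₀ := by
          intro e he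
          rcases List.mem_append.1 he with h4 | h4
          · exact hβ e (hβ2 ▸ List.mem_append_left _ h4)
          · exact hβ e (hβ2 ▸ List.mem_append_right _ (List.mem_cons_of_mem _ h4))
        obtain ⟨hab, huv⟩ := ih (fun e he => hα e (List.mem_cons_of_mem _ he))
          (p ++ t') hsub (mkl I μ) (mkl I ω) hu hv h3
        refine ⟨?_, huv⟩
        rw [mkl_cons, hab, ← mkl_cons, ← hβ3]

end TraceUF

/-- Every element `w` of `M = M(Σ,I)` factors uniquely as `w = a·u` where `a` lies in
the submonoid `M₀ = M(Σ₀, I₀)` (identified with its image in `M`), and `u` lies in the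
set `B` of elements admitting no factorization `u = s·u₀` with `1 ≠ s ∈ M₀`. -/
theorem unique_factorization_over_submonoid {σ : Type*} [Fintype σ] (I : σ → σ → Prop)
    (hsym : Symmetric I) (hirr : Irreflexive I) (S₀ : Set σ) :
    letI M₀ : Submonoid (TraceMonoid σ I) := MonoidHom.mrange (TraceMonoid.embed I S₀)
    letI B : Set (TraceMonoid σ I) :=
      {u | ¬ ∃ s ∈ M₀, s ≠ 1 ∧ ∃ u₀, u = s * u₀}
    (∀ w : TraceMonoid σ I, ∃ a ∈ M₀, ∃ u ∈ B, w = a * u) ∧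
    (∀ a b u v : TraceMonoid σ I, a ∈ M₀ → b ∈ M₀ → u ∈ B → v ∈ B →
      a * u = b * v → a = b ∧ u = v) := by
  refine ⟨?_, ?_⟩
  · have exist : ∀ n (w : TraceMonoid σ I), TraceUF.len w ≤ n →
        ∃ a ∈ MonoidHom.mrange (TraceMonoid.embed I S₀),
          ∃ u ∈ {u : TraceMonoid σ I | ¬ ∃ s ∈ MonoidHom.mrange (TraceMonoid.embed I S₀),
            s ≠ 1 ∧ ∃ u₀, u = s * u₀}, w = a * u := by
      intro n
      induction n with
      | zero =>
        intro w hw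
        by_cases hBw : ¬ ∃ s ∈ MonoidHom.mrange (TraceMonoid.embed I S₀),
            s ≠ 1 ∧ ∃ u₀, w = s * u₀
        · exact ⟨1, one_mem _, w, hBw, (one_mul w).symm⟩
        · exfalso
          obtain ⟨s, hs, hs1, u₀, rfl⟩ := not_not.mp hBw
          have h1 := TraceUF.len_pos_of_ne_one hsym hirr hs1
          rw [TraceUF.len_mul] at hw
          omega
      | succ n ih =>
        intro w hw
        by_cases hBw : ¬ ∃ s ∈ MonoidHom.mrange (TraceMonoid.embed I S₀),
            s ≠ 1 ∧ ∃ u₀, w = s * u₀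
        · exact ⟨1, one_mem _, w, hBw, (one_mul w).symm⟩
        · obtain ⟨s, hs, hs1, u₀, rfl⟩ := not_not.mp hBw
          have h1 := TraceUF.len_pos_of_ne_one hsym hirr hs1
          rw [TraceUF.len_mul] at hw
          obtain ⟨a, ha, u, hu, rfl⟩ := ih u₀ (by omega)
          exact ⟨s * a, mul_mem hs ha, u, hu, (mul_assoc s a u).symm⟩
    exact fun w => exist (TraceUF.len w) w le_rfl
  · intro a b u v ha hb hu hv h
    obtain ⟨α, hα, rfl⟩ := TraceUF.rep_of_mem_range S₀ ha
    obtain ⟨β, hβ, rfl⟩ := TraceUF.rep_of_mem_range S₀ hb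
    exact TraceUF.key hsym hirr S₀ α hα β hβ u v hu hv h
end

section
/- Let M = ⟨a⟩ be the infinite cyclic (free) monoid on one generator a (isomorphic to (ℕ,+)) and let M_0 = {1, a², a³, …, aⁿ, …} be the submonoid of M consisting of the identity and all powers aⁿ with n ≥ 2. Then the monoid ring ℤM is not a free ℤM_0-module (with respect to the module structure induced by the inclusion ℤM_0 ⊆ ℤM). -/
/-- The submonoid `M₀ = {1, a², a³, …}` of the infinite cyclic monoid `M = ⟨a⟩`
(written here as `Multiplicative ℕ`): under the isomorphism with `(ℕ, +)` it is
`{0} ∪ {n : ℕ | n ≥ 2}`, i.e. everything except `a¹`. -/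
def cyclicSubmonoid : Submonoid (Multiplicative ℕ) where
  carrier := {x | Multiplicative.toAdd x ≠ 1}
  one_mem' := by simp
  mul_mem' := by
    intro a b ha hb
    simp only [Set.mem_setOf_eq, toAdd_mul] at *
    omega

section aux

local notation "R" => MonoidAlgebra ℤ cyclicSubmonoid
local notation "A" => MonoidAlgebra ℤ (Multiplicative ℕ)

/-- The shift-by-`a²` map `ℤM → ℤM₀`, `p ↦ a²·p`. -/
noncomputable def auxShift (p : A) : R :=
  MonoidAlgebra.mapDomain
    (fun n => (⟨Multiplicative.ofAdd 2 * n, by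
      simp only [cyclicSubmonoid, Submonoid.mem_mk, Subsemigroup.mem_mk, Set.mem_setOf_eq,
        toAdd_mul, toAdd_ofAdd]
      omega⟩ : cyclicSubmonoid)) p

lemma auxShift_injective : Function.Injective auxShift := by
  apply MonoidAlgebra.mapDomain_injective
  intro n m h
  have := congrArg (fun u : cyclicSubmonoid => Multiplicative.toAdd u.1) h
  simpa using this

lemma map_auxShift (p : A) :
    MonoidAlgebra.mapDomainRingHom ℤ cyclicSubmonoid.subtype (auxShift p)
      = MonoidAlgebra.single (Multiplicative.ofAdd 2) (1 : ℤ) * p := by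
  induction p using MonoidAlgebra.induction_linear with
  | zero => simp [auxShift]
  | add p q hp hq =>
      rw [auxShift, MonoidAlgebra.mapDomain_add, ← auxShift, ← auxShift, map_add, hp, hq, mul_add]
  | single a c =>
      rw [auxShift, MonoidAlgebra.mapDomain_single]
      show MonoidAlgebra.mapDomain _ _ = _
      rw [MonoidAlgebra.mapDomain_single, MonoidAlgebra.single_mul_single, one_mul]
      rfl

/-- Evaluation at `a = 0`: the character sending `1 ↦ 1` and `aⁿ ↦ 0` for `n ≥ 1`. -/
noncomputable def auxChar : Multiplicative ℕ →* ℤ where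
  toFun n := if n = 1 then 1 else 0
  map_one' := if_pos rfl
  map_mul' a b := by
    rcases eq_or_ne a 1 with rfl | ha
    · simp
    · have hab : a * b ≠ 1 := by
        intro h
        apply ha
        have : Multiplicative.toAdd a + Multiplicative.toAdd b = 0 := by
          simpa [← toAdd_mul] using congrArg Multiplicative.toAdd h
        have : Multiplicative.toAdd a = 0 := by omega
        exact toAdd_eq_zero.mp this
      simp [ha, hab]

noncomputable def auxEps : A →ₐ[ℤ] ℤ :=
  MonoidAlgebra.lift ℤ ℤ (Multiplicative ℕ) auxChar

lemma auxEps_apply (p : A) : auxEps p = p.coeff 1 := by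
  rw [auxEps, MonoidAlgebra.lift_apply, Finsupp.sum]
  rw [Finset.sum_eq_single (1 : Multiplicative ℕ)]
  · simp [auxChar]
  · intro b _ hb
    simp [auxChar, hb]
  · intro h1
    simp [Finsupp.notMem_support_iff.mp h1]

end aux

/-- The monoid ring `ℤM` of the infinite cyclic monoid `M = ⟨a⟩` is **not** a free
module over the monoid ring `ℤM₀` of the submonoid `M₀ = {1, a², a³, …}`, with respect
to the module structure induced by the inclusion `ℤM₀ ⊆ ℤM`. -/
theorem monoidAlgebra_cyclic_not_free_over_submonoid :
    ¬ @Module.Free (MonoidAlgebra ℤ cyclicSubmonoid)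
      (MonoidAlgebra ℤ (Multiplicative ℕ)) _ _
      (Module.compHom _ (MonoidAlgebra.mapDomainRingHom ℤ cyclicSubmonoid.subtype)) := by
  set f := MonoidAlgebra.mapDomainRingHom ℤ cyclicSubmonoid.subtype with hf
  letI : Module (MonoidAlgebra ℤ cyclicSubmonoid) (MonoidAlgebra ℤ (Multiplicative ℕ)) :=
    Module.compHom _ f
  intro h
  classical
  obtain ⟨⟨ι, b⟩⟩ := h.exists_basis
  have hsmul : ∀ (r : MonoidAlgebra ℤ cyclicSubmonoid) (m : MonoidAlgebra ℤ (Multiplicative ℕ)),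
      r • m = f r * m := fun r m => rfl
  -- the index type is a subsingleton
  have hsub : ∀ i j : ι, i = j := by
    intro i j
    by_contra hij
    have hli := linearIndependent_iff'.mp b.linearIndependent {i, j}
      (fun k => if k = i then auxShift (b j) else -auxShift (b i)) ?_ i (by simp)
    · have : b j = 0 := auxShift_injective (by simpa [auxShift] using hli)
      exact b.ne_zero j (by simpa using this)
    · rw [Finset.sum_pair hij]
      simp only [eq_self_iff_true, if_true, if_neg (Ne.symm hij)]
      rw [hsmul, hsmul, map_auxShift, map_neg, map_auxShift, neg_mul]
      ring
  haveI : Subsingleton ι := ⟨hsub⟩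
  rcases isEmpty_or_nonempty ι with hι | ⟨⟨i⟩⟩
  · exact one_ne_zero (b.repr.injective (Subsingleton.elim _ _))
  · haveI : Unique ι := uniqueOfSubsingleton i
    haveI : Fintype ι := Fintype.ofSubsingleton i
    have hrepr : ∀ m : MonoidAlgebra ℤ (Multiplicative ℕ),
        f (b.repr m default) * b default = m := by
      intro m
      have := b.sum_repr m
      rwa [Finset.sum_eq_single_of_mem default (Finset.mem_univ _)
        (fun c _ hc => absurd (Subsingleton.elim c default) hc), hsmul] at this
    set X : MonoidAlgebra ℤ (Multiplicative ℕ) :=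
      MonoidAlgebra.single (Multiplicative.ofAdd 1) (1 : ℤ) with hX
    have h1 := hrepr 1
    have h2 := hrepr X
    set r := b.repr 1 default
    set s := b.repr X default
    -- b default ≠ 0
    have hb0 : b default ≠ 0 := b.ne_zero default
    -- X * f r = f s
    have key : X * f r = f s := by
      have hz : (X * f r - f s) * b default = 0 := by
        rw [sub_mul, mul_assoc, h1, mul_one, h2, sub_self]
      rcases mul_eq_zero.mp hz with hz | hz
      · exact sub_eq_zero.mp hz
      · exact absurd hz hb0
    -- coefficient at a¹ : constant coefficient of f r vanishes
    have hzero : (f r).coeff 1 = 0 := by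
      have hL : (X * f r).coeff (Multiplicative.ofAdd 1) = 1 * (f r).coeff 1 := by
        rw [hX]
        refine MonoidAlgebra.coeff_single_mul_eq_mul_coeff 1 (fun a _ => ?_)
        constructor
        · intro h
          have := congrArg Multiplicative.toAdd h
          simp only [toAdd_mul, toAdd_ofAdd] at this
          have : Multiplicative.toAdd a = 0 := by omega
          exact toAdd_eq_zero.mp this
        · rintro rfl; exact mul_one _
      have hR : (f s).coeff (Multiplicative.ofAdd 1) = 0 := by
        refine Finsupp.mapDomain_of_notMem_range _ _ ?_
        rintro ⟨⟨u, hu⟩, huv⟩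
        exact hu (by simpa using congrArg Multiplicative.toAdd huv)
      rw [key, hR] at hL
      linarith [hL]
    -- but ε(f r) · ε(b default) = 1 and ε(f r) = f r 1 = 0
    have := congrArg auxEps h1
    rw [map_mul, map_one, auxEps_apply (f r), hzero, zero_mul] at this
    exact zero_ne_one this
end
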